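/- arXiv:2408.15904 — 7 statements merged into one kernel-verified Lean document; each statement's English description precedes it below -/
import Mathlib

section
/- Let κ > 0, R ≥ 0 and let b : ℝ^d → ℝ^d satisfy ⟨b(x) − b(y), x − y⟩ ≤ −κ|x − y|² whenever |x| ≥ R and |y| ≥ R. Let f : [0,1] → ℝ^d be continuous and let u, v : [0,1] → ℝ^d be differentiable functions satisfying u'(t) − v'(t) = f(t) + b(u(t)) − b(v(t)) for every t ∈ [0,1]. Fix 0 ≤ t₁ ≤ t₂ ≤ 1 and assume |u(t)| ≥ R and |v(t)| ≥ R for all t ∈ [t₁, t₂]. Then for every ε > 0, |u(t₂) − v(t₂)|² ≤ |u(t₁) − v(t₁)|² e^{(ε−2κ)(t₂−t₁)} + ε^{−1} ∫_{t₁}^{t₂} e^{(ε−2κ)(t₂−s)} |f(s)|² ds. -/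
open MeasureTheory Set
open scoped RealInnerProductSpace

set_option maxHeartbeats 1000000

/-- Pathwise Gronwall-type estimate in the contractive region: if the drift `b` is
`κ`-contractive on `{|x| ≥ R}` and both paths stay in that region on `[t₁, t₂]`,
then the squared distance contracts at rate `ε - 2κ`. -/
theorem stmt_2 (d : ℕ) (κ R : ℝ) (hκ : 0 < κ) (hR : 0 ≤ R)
    (b : EuclideanSpace ℝ (Fin d) → EuclideanSpace ℝ (Fin d))
    (hb : ∀ x y : EuclideanSpace ℝ (Fin d), R ≤ ‖x‖ → R ≤ ‖y‖ →
      ⟪b x - b y, x - y⟫ ≤ -κ * ‖x - y‖ ^ 2)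
    (f u v u' v' : ℝ → EuclideanSpace ℝ (Fin d))
    (hf : ContinuousOn f (Icc 0 1))
    (hu : ∀ t ∈ Icc (0:ℝ) 1, HasDerivAt u (u' t) t)
    (hv : ∀ t ∈ Icc (0:ℝ) 1, HasDerivAt v (v' t) t)
    (hode : ∀ t ∈ Icc (0:ℝ) 1, u' t - v' t = f t + b (u t) - b (v t))
    (t₁ t₂ : ℝ) (ht₁ : 0 ≤ t₁) (ht₁₂ : t₁ ≤ t₂) (ht₂ : t₂ ≤ 1)
    (hregion : ∀ t ∈ Icc t₁ t₂, R ≤ ‖u t‖ ∧ R ≤ ‖v t‖) :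
    ∀ ε > (0:ℝ),
      ‖u t₂ - v t₂‖ ^ 2 ≤ ‖u t₁ - v t₁‖ ^ 2 * Real.exp ((ε - 2 * κ) * (t₂ - t₁))
        + ε⁻¹ * ∫ s in t₁..t₂, Real.exp ((ε - 2 * κ) * (t₂ - s)) * ‖f s‖ ^ 2 := by
  intro ε hε
  set α : ℝ := ε - 2 * κ with hαdef
  set g : ℝ → ℝ := fun s => Real.exp (-α * s) * (ε⁻¹ * ‖f s‖ ^ 2) with hgdef
  have hsub : Icc t₁ t₂ ⊆ Icc (0:ℝ) 1 := Icc_subset_Icc ht₁ ht₂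
  -- continuity of g on [0,1]
  have hgcont : ContinuousOn g (Icc 0 1) := by
    apply ContinuousOn.mul
      ((Real.continuous_exp.comp (continuous_const.mul continuous_id)).continuousOn)
    exact continuousOn_const.mul ((hf.norm).pow 2)
  -- φ derivative
  have hw : ∀ t ∈ Icc (0:ℝ) 1, HasDerivAt (fun t => u t - v t) (u' t - v' t) t :=
    fun t ht => (hu t ht).sub (hv t ht)
  have hφ : ∀ t ∈ Icc (0:ℝ) 1,
      HasDerivAt (fun t => ‖u t - v t‖ ^ 2)
        (2 * ⟪u' t - v' t, u t - v t⟫) t := by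
    intro t ht
    have h := (hw t ht).inner ℝ (hw t ht)
    simp only [real_inner_self_eq_norm_sq] at h
    refine h.congr_deriv ?_
    rw [real_inner_comm]
    ring
  set ψ : ℝ → ℝ := fun t => Real.exp (-α * t) * ‖u t - v t‖ ^ 2
      - ∫ s in t₁..t, g s with hψdef
  -- ψ is antitone on [t₁, t₂]
  have key : ψ t₂ ≤ ψ t₁ := by
    have hconv : Convex ℝ (Icc t₁ t₂) := convex_Icc _ _
    -- HasDerivAt ψ at interior points
    have hder : ∀ t ∈ Ioo t₁ t₂,
        HasDerivAt ψ ((-α) * Real.exp (-α * t) * ‖u t - v t‖ ^ 2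
          + Real.exp (-α * t) * (2 * ⟪u' t - v' t, u t - v t⟫) - g t) t := by
      intro t ht
      have ht01 : t ∈ Icc (0:ℝ) 1 := hsub (Ioo_subset_Icc_self ht)
      have hnbhd : Icc (0:ℝ) 1 ∈ nhds t :=
        Icc_mem_nhds (lt_of_le_of_lt ht₁ ht.1) (lt_of_lt_of_le ht.2 ht₂)
      have hgint : IntervalIntegrable g volume t₁ t := by
        apply ContinuousOn.intervalIntegrable
        exact hgcont.mono (fun s hs => hsub (by
          rcases hs with hs
          exact ⟨le_trans (le_min le_rfl ht.1.le) hs.1,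
            le_trans hs.2 (max_le ht₁₂ ht.2.le)⟩))
      have hgct : ContinuousAt g t := hgcont.continuousAt hnbhd
      have h2 : HasDerivAt (fun t => ∫ s in t₁..t, g s) (g t) t :=
        intervalIntegral.integral_hasDerivAt_right hgint
          ⟨Icc 0 1, hnbhd, (hgcont.aestronglyMeasurable measurableSet_Icc)⟩ hgct
      have h1 : HasDerivAt (fun t => Real.exp (-α * t) * ‖u t - v t‖ ^ 2)
          ((-α) * Real.exp (-α * t) * ‖u t - v t‖ ^ 2
            + Real.exp (-α * t) * (2 * ⟪u' t - v' t, u t - v t⟫)) t := by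
        have he : HasDerivAt (fun t : ℝ => Real.exp (-α * t)) ((-α) * Real.exp (-α * t)) t := by
          have := ((hasDerivAt_id t).const_mul (-α)).exp
          simpa [mul_comm] using this
        exact he.mul (hφ t ht01)
      exact h1.sub h2
    have hcont : ContinuousOn ψ (Icc t₁ t₂) := by
      apply ContinuousOn.sub
      · apply ContinuousOn.mul
          ((Real.continuous_exp.comp (continuous_const.mul continuous_id)).continuousOn)
        intro t ht
        exact (((hu t (hsub ht)).sub (hv t (hsub ht))).continuousAt.norm.pow 2).continuousWithinAt
      · have : IntegrableOn g (uIcc t₁ t₂) volume := by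
          rw [uIcc_of_le ht₁₂]
          exact (hgcont.mono hsub).integrableOn_compact isCompact_Icc
        have := intervalIntegral.continuousOn_primitive_interval this
        rwa [uIcc_of_le ht₁₂] at this
    have hdiff : DifferentiableOn ℝ ψ (interior (Icc t₁ t₂)) := by
      rw [interior_Icc]
      exact fun t ht => ((hder t ht).differentiableAt).differentiableWithinAt
    have hnonpos : ∀ t ∈ interior (Icc t₁ t₂), deriv ψ t ≤ 0 := by
      rw [interior_Icc]
      intro t ht
      rw [(hder t ht).deriv]
      have ht01 : t ∈ Icc (0:ℝ) 1 := hsub (Ioo_subset_Icc_self ht)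
      have hreg := hregion t (Ioo_subset_Icc_self ht)
      -- key inner product bound
      have hineq : 2 * ⟪u' t - v' t, u t - v t⟫
          ≤ α * ‖u t - v t‖ ^ 2 + ε⁻¹ * ‖f t‖ ^ 2 := by
        rw [hode t ht01]
        have hsplit : ⟪f t + b (u t) - b (v t), u t - v t⟫
            = ⟪f t, u t - v t⟫ + ⟪b (u t) - b (v t), u t - v t⟫ := by
          rw [show f t + b (u t) - b (v t) = f t + (b (u t) - b (v t)) by abel,
            inner_add_left]
        rw [hsplit]
        have h1 : ⟪f t, u t - v t⟫ ≤ ‖f t‖ * ‖u t - v t‖ := real_inner_le_norm _ _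
        have h2 := hb (u t) (v t) hreg.1 hreg.2
        have hyoung : 2 * (‖f t‖ * ‖u t - v t‖) ≤ ε * ‖u t - v t‖ ^ 2 + ε⁻¹ * ‖f t‖ ^ 2 := by
          have h0 : (0:ℝ) ≤ (ε * ‖u t - v t‖ - ‖f t‖) ^ 2 := sq_nonneg _
          have hεi : ε * ε⁻¹ = 1 := mul_inv_cancel₀ hε.ne'
          nlinarith [sq_nonneg (ε * ‖u t - v t‖ - ‖f t‖), mul_pos hε hε]
        simp only [hαdef]
        nlinarith
      have hexp : 0 < Real.exp (-α * t) := Real.exp_pos _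
      have : (-α) * Real.exp (-α * t) * ‖u t - v t‖ ^ 2
          + Real.exp (-α * t) * (2 * ⟪u' t - v' t, u t - v t⟫)
          ≤ Real.exp (-α * t) * (ε⁻¹ * ‖f t‖ ^ 2) := by
        have := mul_le_mul_of_nonneg_left hineq hexp.le
        nlinarith
      simpa [hgdef] using sub_nonpos.mpr this
    exact antitoneOn_of_deriv_nonpos hconv hcont hdiff hnonpos
      (left_mem_Icc.mpr ht₁₂) (right_mem_Icc.mpr ht₁₂) ht₁₂
  -- unfold ψ and conclude
  have hint_eq : ∫ s in t₁..t₂, Real.exp (α * (t₂ - s)) * ‖f s‖ ^ 2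
      = Real.exp (α * t₂) * ∫ s in t₁..t₂, Real.exp (-α * s) * ‖f s‖ ^ 2 := by
    rw [← intervalIntegral.integral_const_mul]
    apply intervalIntegral.integral_congr
    intro s _
    dsimp only
    rw [← mul_assoc, ← Real.exp_add]
    ring_nf
  have hgint2 : ∫ s in t₁..t₂, g s = ε⁻¹ * ∫ s in t₁..t₂, Real.exp (-α * s) * ‖f s‖ ^ 2 := by
    rw [← intervalIntegral.integral_const_mul]
    apply intervalIntegral.integral_congr
    intro s _
    simp [hgdef]; ring
  have hE1 : (0:ℝ) < Real.exp (α * t₂) := Real.exp_pos _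
  have hkey : Real.exp (-α * t₂) * ‖u t₂ - v t₂‖ ^ 2
      ≤ Real.exp (-α * t₁) * ‖u t₁ - v t₁‖ ^ 2 + ∫ s in t₁..t₂, g s := by
    have := key
    simp only [hψdef, intervalIntegral.integral_same, sub_zero] at this
    linarith [this]
  have hmul := mul_le_mul_of_nonneg_left hkey hE1.le
  have e1 : Real.exp (α * t₂) * (Real.exp (-α * t₂) * ‖u t₂ - v t₂‖ ^ 2)
      = ‖u t₂ - v t₂‖ ^ 2 := by
    rw [← mul_assoc, ← Real.exp_add]; ring_nf; simp
  have e2 : Real.exp (α * t₂) * Real.exp (-α * t₁)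
      = Real.exp (α * (t₂ - t₁)) := by
    rw [← Real.exp_add]; ring_nf
  calc ‖u t₂ - v t₂‖ ^ 2
      = Real.exp (α * t₂) * (Real.exp (-α * t₂) * ‖u t₂ - v t₂‖ ^ 2) := e1.symm
    _ ≤ Real.exp (α * t₂) * (Real.exp (-α * t₁) * ‖u t₁ - v t₁‖ ^ 2 + ∫ s in t₁..t₂, g s) := hmul
    _ = ‖u t₁ - v t₁‖ ^ 2 * Real.exp (α * (t₂ - t₁))
        + ε⁻¹ * ∫ s in t₁..t₂, Real.exp (α * (t₂ - s)) * ‖f s‖ ^ 2 := by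
        rw [mul_add, ← mul_assoc, e2, hgint2, hint_eq]
        ring
end

section
/- Let ϖ > 0 and let z : [0,∞) → [0,∞) be a differentiable function satisfying z'(t) ≤ −2ϖ z(t)^{3/4} for all t ≥ 0. Then z(t)^{1/4} ≤ max(z(0)^{1/4} − ϖ t/2, 0) for all t ≥ 0. In particular, z(t) = 0 for every t ≥ 2 z(0)^{1/4}/ϖ. -/
/-- Comparison/decay estimate: if `z ≥ 0` satisfies `z' ≤ -2ϖ z^{3/4}` on `[0,∞)`,
then `z(t)^{1/4} ≤ max(z(0)^{1/4} - ϖ t/2, 0)`; in particular `z` vanishes after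
time `2 z(0)^{1/4}/ϖ`. -/
theorem stmt_3 (ϖ : ℝ) (hϖ : 0 < ϖ) (z z' : ℝ → ℝ)
    (hz_nonneg : ∀ t, 0 ≤ t → 0 ≤ z t)
    (hz : ∀ t, 0 ≤ t → HasDerivAt z (z' t) t)
    (hz' : ∀ t, 0 ≤ t → z' t ≤ -2 * ϖ * z t ^ (3/4 : ℝ)) :
    (∀ t, 0 ≤ t → z t ^ (1/4 : ℝ) ≤ max (z 0 ^ (1/4 : ℝ) - ϖ * t / 2) 0) ∧
      (∀ t, 2 * z 0 ^ (1/4 : ℝ) / ϖ ≤ t → z t = 0) := by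
  have hanti : AntitoneOn z (Set.Ici 0) := by
    apply antitoneOn_of_deriv_nonpos (convex_Ici 0)
    · exact fun x hx => (hz x hx).continuousAt.continuousWithinAt
    · intro x hx
      rw [interior_Ici] at hx
      exact (hz x hx.le).differentiableAt.differentiableWithinAt
    · intro x hx
      rw [interior_Ici] at hx
      rw [(hz x hx.le).deriv]
      have h0 := hz' x hx.le
      have h1 : 0 ≤ z x ^ (3/4:ℝ) := Real.rpow_nonneg (hz_nonneg x hx.le) _
      nlinarith
  have main : ∀ t, 0 ≤ t → z t ^ (1/4:ℝ) ≤ max (z 0 ^ (1/4:ℝ) - ϖ * t / 2) 0 := by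
    intro t ht
    by_contra h
    push_neg at h
    have hmax0 : (0:ℝ) ≤ max (z 0 ^ (1/4:ℝ) - ϖ * t / 2) 0 := le_max_right _ _
    have hzt : 0 < z t := by
      rcases (hz_nonneg t ht).lt_or_eq with h1 | h1
      · exact h1
      · rw [← h1, Real.zero_rpow (by norm_num)] at h; linarith
    have hpos : ∀ s ∈ Set.Icc (0:ℝ) t, 0 < z s := fun s hs =>
      lt_of_lt_of_le hzt (hanti hs.1 ht hs.2)
    set g : ℝ → ℝ := fun s => z s ^ (1/4:ℝ) + ϖ/2 * s with hg
    have hgd : ∀ s ∈ Set.Icc (0:ℝ) t,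
        HasDerivAt g (z' s * (1/4) * z s ^ ((1:ℝ)/4 - 1) + ϖ/2) s := by
      intro s hs
      have h2 : HasDerivAt (fun s : ℝ => ϖ/2 * s) (ϖ/2) s := by
        simpa using (hasDerivAt_id s).const_mul (ϖ/2)
      exact ((hz s hs.1).rpow_const (Or.inl (hpos s hs).ne')).add h2
    have hderiv_le : ∀ s ∈ Set.Icc (0:ℝ) t,
        z' s * (1/4) * z s ^ ((1:ℝ)/4 - 1) + ϖ/2 ≤ 0 := by
      intro s hs
      have hps := hpos s hs
      have h34 : 0 < z s ^ ((1:ℝ)/4 - 1) := Real.rpow_pos_of_pos hps _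
      have hzp : z s ^ ((3:ℝ)/4) * z s ^ ((1:ℝ)/4 - 1) = 1 := by
        rw [← Real.rpow_add hps]; norm_num
      have hle := hz' s hs.1
      have key : z' s * z s ^ ((1:ℝ)/4 - 1) ≤ -2*ϖ := by
        calc z' s * z s ^ ((1:ℝ)/4 - 1)
            ≤ (-2 * ϖ * z s ^ ((3:ℝ)/4)) * z s ^ ((1:ℝ)/4 - 1) :=
              mul_le_mul_of_nonneg_right hle h34.le
          _ = -2 * ϖ * (z s ^ ((3:ℝ)/4) * z s ^ ((1:ℝ)/4 - 1)) := by ring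
          _ = -2 * ϖ := by rw [hzp]; ring
      have hre : z' s * (1/4) * z s ^ ((1:ℝ)/4 - 1)
          = (z' s * z s ^ ((1:ℝ)/4 - 1)) * (1/4) := by ring
      rw [hre]; linarith
    have hganti : AntitoneOn g (Set.Icc 0 t) := by
      apply antitoneOn_of_deriv_nonpos (convex_Icc 0 t)
      · exact fun s hs => (hgd s hs).continuousAt.continuousWithinAt
      · intro s hs
        rw [interior_Icc] at hs
        exact (hgd s (Set.mem_Icc_of_Ioo hs)).differentiableAt.differentiableWithinAt
      · intro s hs
        rw [interior_Icc] at hs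
        rw [(hgd s (Set.mem_Icc_of_Ioo hs)).deriv]
        exact hderiv_le s (Set.mem_Icc_of_Ioo hs)
    have hgt := hganti (Set.left_mem_Icc.2 ht) (Set.right_mem_Icc.2 ht) ht
    simp only [hg] at hgt
    have hmax := le_max_left (z 0 ^ (1/4:ℝ) - ϖ * t / 2) (0:ℝ)
    linarith
  refine ⟨main, fun t htT => ?_⟩
  have hz0 : 0 ≤ z 0 ^ (1/4:ℝ) := Real.rpow_nonneg (hz_nonneg 0 le_rfl) _
  have ht : 0 ≤ t := le_trans (by positivity) htT
  have h1 := main t ht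
  have h2 : z 0 ^ (1/4:ℝ) - ϖ * t / 2 ≤ 0 := by
    rw [div_le_iff₀ hϖ] at htT; nlinarith
  rw [max_eq_right h2] at h1
  have h3 : z t ^ (1/4:ℝ) = 0 :=
    le_antisymm h1 (Real.rpow_nonneg (hz_nonneg t ht) _)
  exact (Real.rpow_eq_zero (hz_nonneg t ht) (by norm_num)).1 h3
end

section
/- Let λ ≥ 0 and let b : ℝ^d → ℝ^d satisfy ⟨b(x) − b(y), x − y⟩ ≤ λ|x − y|² for all x, y ∈ ℝ^d. Let x : [0,∞) → ℝ^d be continuous and let ϖ > 0. If ρ : [0,∞) → ℝ^d is differentiable and satisfies ρ'(t) = b(x(t) + ρ(t)) − b(x(t)) − ϖ g(ρ(t)) − λ ρ(t) for all t ≥ 0, then |ρ(t)|^{1/2} ≤ max(|ρ(0)|^{1/2} − ϖ t/2, 0) for all t ≥ 0. In particular ρ(t) = 0 for all t ≥ 2|ρ(0)|^{1/2}/ϖ. -/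
open Set
open scoped RealInnerProductSpace

/-- The map `g(ρ) = |ρ|^{-1/2} ρ` for `ρ ≠ 0`, `g(0) = 0` (note `0 ^ (-(1/2)) = 0`
for the real power function). -/
noncomputable def gMap (d : ℕ) (ρ : EuclideanSpace ℝ (Fin d)) : EuclideanSpace ℝ (Fin d) :=
  (‖ρ‖ ^ (-(1/2) : ℝ)) • ρ

private lemma sqrt_aux {a m : ℝ} (hm : 0 ≤ m) (h : a = m ^ 2) :
    a ^ ((3:ℝ)/2) = m ^ 3 := by
  subst h
  rw [← Real.rpow_natCast m 2, ← Real.rpow_mul hm, ← Real.rpow_natCast m 3]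
  norm_num

private lemma pow_half_pow_four {a : ℝ} (ha : 0 ≤ a) : (a ^ (1/2 : ℝ)) ^ 4 = a ^ 2 := by
  rw [← Real.rpow_natCast (a ^ (1/2 : ℝ)) 4, ← Real.rpow_mul ha,
    ← Real.rpow_natCast a 2]
  norm_num

set_option maxHeartbeats 2000000 in
private lemma eq_of_sq_eq {a m : ℝ} (ha : 0 ≤ a) (hm : 0 ≤ m) (h : a ^ 2 = m ^ 2) :
    a = m := by
  nlinarith [sq_nonneg (a - m), sq_nonneg (a + m)]

set_option maxHeartbeats 2000000 in
/-- Decay estimate (eq:controlrhott): the controlled ODE solution satisfies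
`|ρ(t)|^{1/2} ≤ max(|ρ(0)|^{1/2} - ϖ t/2, 0)`, hence reaches `0` in finite time. -/
theorem stmt_4 (d : ℕ) (lam : ℝ) (hlam : 0 ≤ lam)
    (b : EuclideanSpace ℝ (Fin d) → EuclideanSpace ℝ (Fin d))
    (hb : ∀ x y : EuclideanSpace ℝ (Fin d), ⟪b x - b y, x - y⟫ ≤ lam * ‖x - y‖ ^ 2)
    (x : ℝ → EuclideanSpace ℝ (Fin d)) (hx : Continuous x)
    (ϖ : ℝ) (hϖ : 0 < ϖ) (ρ : ℝ → EuclideanSpace ℝ (Fin d))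
    (hρ : ∀ t, 0 ≤ t →
      HasDerivAt ρ (b (x t + ρ t) - b (x t) - ϖ • gMap d (ρ t) - lam • ρ t) t) :
    (∀ t, 0 ≤ t → ‖ρ t‖ ^ (1/2 : ℝ) ≤ max (‖ρ 0‖ ^ (1/2 : ℝ) - ϖ * t / 2) 0) ∧
      (∀ t, 2 * ‖ρ 0‖ ^ (1/2 : ℝ) / ϖ ≤ t → ρ t = 0) := by
  obtain ⟨c, hc_def⟩ : ∃ c : ℝ, c = ‖ρ 0‖ ^ (1/2 : ℝ) := ⟨_, rfl⟩
  have hc : 0 ≤ c := hc_def ▸ Real.rpow_nonneg (norm_nonneg _) _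
  obtain ⟨f, hfnorm⟩ : ∃ f : ℝ → ℝ, ∀ t, f t = ‖ρ t‖ ^ 2 := ⟨_, fun _ => rfl⟩
  obtain ⟨D, hD_def⟩ : ∃ D : ℝ → ℝ, ∀ t, D t =
      ⟪ρ t, b (x t + ρ t) - b (x t) - ϖ • gMap d (ρ t) - lam • ρ t⟫ +
        ⟪b (x t + ρ t) - b (x t) - ϖ • gMap d (ρ t) - lam • ρ t, ρ t⟫ := ⟨_, fun _ => rfl⟩
  -- `f` has derivative `D` on `[0, ∞)`
  have hfD : ∀ t, 0 ≤ t → HasDerivAt f (D t) t := by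
    intro t ht
    have h1 : HasDerivAt (fun t => ⟪ρ t, ρ t⟫ : ℝ → ℝ)
        (⟪ρ t, b (x t + ρ t) - b (x t) - ϖ • gMap d (ρ t) - lam • ρ t⟫ +
          ⟪b (x t + ρ t) - b (x t) - ϖ • gMap d (ρ t) - lam • ρ t, ρ t⟫) t :=
      (hρ t ht).inner ℝ (hρ t ht)
    have heq : f = (fun t => ⟪ρ t, ρ t⟫ : ℝ → ℝ) := by
      funext s
      rw [hfnorm s, real_inner_self_eq_norm_sq]
    rw [heq, hD_def]
    exact h1
  -- the key pointwise derivative bound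
  have hDle : ∀ t, 0 ≤ t → D t ≤ -(2 * ϖ) * ‖ρ t‖ ^ ((3:ℝ)/2) := by
    intro t ht
    have h1 : ⟪b (x t + ρ t) - b (x t), ρ t⟫ ≤ lam * ‖ρ t‖ ^ 2 := by
      have := hb (x t + ρ t) (x t)
      rwa [add_sub_cancel_left] at this
    have h2 : ⟪gMap d (ρ t), ρ t⟫ = ‖ρ t‖ ^ ((3:ℝ)/2) := by
      rw [gMap, real_inner_smul_left, real_inner_self_eq_norm_sq]
      rcases eq_or_ne (‖ρ t‖) 0 with h | h
      · rw [h, Real.zero_rpow (by norm_num), Real.zero_rpow (by norm_num), zero_mul]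
      · rw [← Real.rpow_natCast (‖ρ t‖) 2, ← Real.rpow_add ((norm_nonneg _).lt_of_ne' h)]
        norm_num
    have h3 : ⟪lam • ρ t, ρ t⟫ = lam * ‖ρ t‖ ^ 2 := by
      rw [real_inner_smul_left, real_inner_self_eq_norm_sq]
    have hsymm : ⟪ρ t, b (x t + ρ t) - b (x t) - ϖ • gMap d (ρ t) - lam • ρ t⟫ =
        ⟪b (x t + ρ t) - b (x t) - ϖ • gMap d (ρ t) - lam • ρ t, ρ t⟫ :=
      real_inner_comm _ _
    rw [hD_def, hsymm]
    rw [inner_sub_left, inner_sub_left, real_inner_smul_left, h2, h3]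
    linarith [h1]
  -- `f` is antitone on `[0, ∞)`
  have hfc : ContinuousOn f (Ici 0) := fun t ht =>
    (hfD t ht).continuousAt.continuousWithinAt
  have hmono : AntitoneOn f (Ici 0) := by
    apply antitoneOn_of_deriv_nonpos (convex_Ici 0) hfc
    · intro t ht
      rw [interior_Ici] at ht
      exact (hfD t (le_of_lt ht)).differentiableAt.differentiableWithinAt
    · intro t ht
      rw [interior_Ici] at ht
      rw [(hfD t (le_of_lt ht)).deriv]
      have h5 := hDle t (le_of_lt ht)
      have h4 : 0 ≤ ‖ρ t‖ ^ ((3:ℝ)/2) := Real.rpow_nonneg (norm_nonneg _) _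
      have h6 : -(2 * ϖ) * ‖ρ t‖ ^ ((3:ℝ)/2) ≤ 0 :=
        mul_nonpos_of_nonpos_of_nonneg (by linarith) h4
      linarith
  -- comparison with the barrier, for every ε > 0
  have hcomp : ∀ t₀, 0 ≤ t₀ → 0 ≤ c - ϖ * t₀ / 2 → ∀ ε : ℝ, 0 < ε →
      f t₀ ≤ (c + ε - (ϖ - ε) * t₀ / 2) ^ 4 := by
    intro t₀ ht₀ hpos ε hε
    have H := image_le_of_deriv_right_lt_deriv_boundary'
      (f := f) (f' := D) (a := 0) (b := t₀)
      (B := fun s => (c + ε - (ϖ - ε) * s / 2) ^ 4)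
      (B' := fun s => 4 * (c + ε - (ϖ - ε) * s / 2) ^ 3 * (-((ϖ - ε) / 2)))
      (fun s hs => (hfc s hs.1).mono Icc_subset_Ici_self)
      (fun s hs => (hfD s hs.1).hasDerivWithinAt)
      ?ha ?hB ?hB' ?bound (right_mem_Icc.2 ht₀)
    · exact H
    · -- f 0 ≤ B 0
      have h0 : f 0 = c ^ 4 := by
        rw [hfnorm, hc_def, ← pow_half_pow_four (norm_nonneg (ρ 0))]
      show f 0 ≤ (c + ε - (ϖ - ε) * 0 / 2) ^ 4
      rw [h0, show c + ε - (ϖ - ε) * 0 / 2 = c + ε by ring]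
      exact pow_le_pow_left₀ hc (by linarith) 4
    · exact (Continuous.continuousOn (by continuity))
    · intro s _
      have hL : HasDerivAt (fun s : ℝ => c + ε - (ϖ - ε) * s / 2) (-((ϖ - ε) / 2)) s := by
        have h7 : HasDerivAt (fun s : ℝ => c + ε - (ϖ - ε) * s / 2)
            (0 - (ϖ - ε) * 1 / 2) s :=
          ((hasDerivAt_const s (c + ε)).sub (((hasDerivAt_id s).const_mul (ϖ - ε)).div_const 2))
        simpa using h7
      exact (hL.pow 4).hasDerivWithinAt
    · -- strict bound at contact points
      intro s hs hfB
      have hfB' : f s = (c + ε - (ϖ - ε) * s / 2) ^ 4 := hfB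
      show D s < 4 * (c + ε - (ϖ - ε) * s / 2) ^ 3 * (-((ϖ - ε) / 2))
      obtain ⟨m, hm_def⟩ : ∃ m : ℝ, m = c + ε - (ϖ - ε) * s / 2 := ⟨_, rfl⟩
      rw [← hm_def] at hfB' ⊢
      have hsle : s ≤ t₀ := le_of_lt hs.2
      have hm : 0 < m := by
        rw [hm_def]
        nlinarith [hs.1, hpos, hε, mul_nonneg hε.le hs.1,
          mul_le_mul_of_nonneg_left hsle hϖ.le]
      have hnorm : ‖ρ s‖ = m ^ 2 := by
        apply eq_of_sq_eq (norm_nonneg _) (sq_nonneg m)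
        rw [← hfnorm, hfB']; ring
      have hrp : ‖ρ s‖ ^ ((3:ℝ)/2) = m ^ 3 := sqrt_aux (le_of_lt hm) hnorm
      have h8 := hDle s hs.1
      rw [hrp] at h8
      have hm3 : 0 < m ^ 3 := pow_pos hm 3
      nlinarith
  -- limit ε → 0
  have hkey : ∀ t₀, 0 ≤ t₀ → 0 ≤ c - ϖ * t₀ / 2 →
      ‖ρ t₀‖ ^ (1/2 : ℝ) ≤ c - ϖ * t₀ / 2 := by
    intro t₀ ht₀ hpos
    by_contra hcon
    push_neg at hcon
    obtain ⟨u, hu_def⟩ : ∃ u : ℝ, u = ‖ρ t₀‖ ^ (1/2 : ℝ) := ⟨_, rfl⟩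
    obtain ⟨v, hv_def⟩ : ∃ v : ℝ, v = c - ϖ * t₀ / 2 := ⟨_, rfl⟩
    rw [← hu_def, ← hv_def] at hcon
    have hv0 : 0 ≤ v := hv_def ▸ hpos
    have hden : (0:ℝ) < 1 + t₀ / 2 := by linarith
    obtain ⟨ε, hε_def⟩ : ∃ ε : ℝ, ε = (u - v) / (2 * (1 + t₀ / 2)) := ⟨_, rfl⟩
    have hε : 0 < ε := hε_def ▸ div_pos (by linarith) (by linarith)
    have hb1 := hcomp t₀ ht₀ hpos ε hε
    have hw : c + ε - (ϖ - ε) * t₀ / 2 = v + ε * (1 + t₀ / 2) := by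
      rw [hv_def]; ring
    rw [hw] at hb1
    have hwu : v + ε * (1 + t₀ / 2) < u := by
      rw [hε_def]
      have h9 : (u - v) / (2 * (1 + t₀ / 2)) * (1 + t₀ / 2) = (u - v) / 2 := by
        field_simp
      rw [h9]; linarith
    have hw0 : 0 ≤ v + ε * (1 + t₀ / 2) := by positivity
    have h2 : (v + ε * (1 + t₀ / 2)) ^ 4 < u ^ 4 :=
      pow_lt_pow_left₀ hwu hw0 (by norm_num)
    have h3 : f t₀ = u ^ 4 := by
      rw [hfnorm, hu_def, pow_half_pow_four (norm_nonneg (ρ t₀))]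
    linarith
  -- second claim
  have habs : ∀ t, 2 * c / ϖ ≤ t → ρ t = 0 := by
    intro t ht
    obtain ⟨T, hT_def⟩ : ∃ T : ℝ, T = 2 * c / ϖ := ⟨_, rfl⟩
    rw [← hT_def] at ht
    have hT0 : 0 ≤ T := hT_def ▸ div_nonneg (by linarith) (le_of_lt hϖ)
    have hTeq : c - ϖ * T / 2 = 0 := by
      rw [hT_def]; field_simp; ring
    have hρT : ‖ρ T‖ = 0 := by
      have h1 := hkey T hT0 (le_of_eq hTeq.symm)
      rw [hTeq] at h1
      by_contra h
      have hp : 0 < ‖ρ T‖ := (norm_nonneg _).lt_of_ne' h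
      exact absurd h1 (not_le.2 (Real.rpow_pos_of_pos hp _))
    have hfT : f T = 0 := by rw [hfnorm, hρT]; ring
    have hft : f t ≤ 0 := by
      have h10 := hmono (show T ∈ Ici (0:ℝ) from hT0)
        (show t ∈ Ici (0:ℝ) from le_trans hT0 ht) ht
      rwa [hfT] at h10
    have hnn : 0 ≤ f t := by rw [hfnorm]; positivity
    have hft0 : f t = 0 := le_antisymm hft hnn
    have h11 : ‖ρ t‖ = 0 := by
      have h12 := hfnorm t
      nlinarith [norm_nonneg (ρ t)]
    exact norm_eq_zero.mp h11
  rw [← hc_def]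
  refine ⟨?_, habs⟩
  intro t ht
  rcases le_or_gt 0 (c - ϖ * t / 2) with hcase | hcase
  · exact le_trans (hkey t ht hcase) (le_max_left _ _)
  · have htT : 2 * c / ϖ ≤ t := by
      rw [div_le_iff₀ hϖ]
      nlinarith
    rw [habs t htT]
    simp only [norm_zero]
    rw [Real.zero_rpow (by norm_num)]
    exact le_max_right _ _
end

section
/- Let λ ≥ 0 and let b : ℝ^d → ℝ^d satisfy ⟨b(x) − b(y), x − y⟩ ≤ λ|x − y|² for all x, y ∈ ℝ^d. Let x : [0,∞) → ℝ^d be continuous, let ρ : [0,∞) → ℝ^d be differentiable with ϖ := 2|ρ(0)|^{1/2} > 0 and ρ'(t) = b(x(t) + ρ(t)) − b(x(t)) − ϖ g(ρ(t)) − λ ρ(t) for all t ≥ 0, and let ς : [0,1] → ℝ^d be continuously differentiable. Define φ(t) = ϖ g(ρ(t)) + λ ρ(t) + ς'(t). Then ρ(1) = 0 and sup_{t∈[0,1]} |φ(t)| ≤ (2 + λ)|ρ(0)| + sup_{t∈[0,1]} |ς'(t)|. -/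
open Set
open scoped RealInnerProductSpace

/-- First conclusion of Lemma 6.2: with `ϖ = 2|ρ(0)|^{1/2}`, the control
`φ(t) = ϖ g(ρ(t)) + λ ρ(t) + ς'(t)` steers `ρ` to `0` at time `1`, and
`sup_{[0,1]} |φ| ≤ (2+λ)|ρ(0)| + sup_{[0,1]} |ς'|`. -/
theorem stmt_5 (d : ℕ) (lam : ℝ) (hlam : 0 ≤ lam)
    (b : EuclideanSpace ℝ (Fin d) → EuclideanSpace ℝ (Fin d))
    (hb : ∀ x y : EuclideanSpace ℝ (Fin d), ⟪b x - b y, x - y⟫ ≤ lam * ‖x - y‖ ^ 2)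
    (x : ℝ → EuclideanSpace ℝ (Fin d)) (hx : Continuous x)
    (ρ : ℝ → EuclideanSpace ℝ (Fin d)) (hρ0 : ρ 0 ≠ 0)
    (hρ : ∀ t, 0 ≤ t →
      HasDerivAt ρ (b (x t + ρ t) - b (x t)
        - (2 * ‖ρ 0‖ ^ (1/2 : ℝ)) • gMap d (ρ t) - lam • ρ t) t)
    (ς ς' : ℝ → EuclideanSpace ℝ (Fin d))
    (hς : ∀ t ∈ Icc (0:ℝ) 1, HasDerivAt ς (ς' t) t)
    (hς' : ContinuousOn ς' (Icc 0 1)) :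
    ρ 1 = 0 ∧
      ∀ t ∈ Icc (0:ℝ) 1,
        ‖(2 * ‖ρ 0‖ ^ (1/2 : ℝ)) • gMap d (ρ t) + lam • ρ t + ς' t‖ ≤
          (2 + lam) * ‖ρ 0‖ + sSup ((fun s => ‖ς' s‖) '' Icc (0:ℝ) 1) := by
  have hq0 : (0:ℝ) < ‖ρ 0‖ := norm_pos_iff.2 hρ0
  set q : ℝ := ‖ρ 0‖ with hqdef
  set ϖ : ℝ := 2 * q ^ (1/2 : ℝ) with hϖdef
  have hϖ0 : 0 < ϖ := by positivity
  set D : ℝ → EuclideanSpace ℝ (Fin d) := fun t =>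
    b (x t + ρ t) - b (x t) - ϖ • gMap d (ρ t) - lam • ρ t with hDdef
  set F : ℝ → ℝ := fun t => ‖ρ t‖ ^ 2 with hFdef
  set F' : ℝ → ℝ := fun t => 2 * ⟪D t, ρ t⟫ with hF'def
  -- derivative of F
  have hF : ∀ t : ℝ, 0 ≤ t → HasDerivAt F (F' t) t := by
    intro t ht
    have h := (hρ t ht).inner ℝ (hρ t ht)
    have h2 : HasDerivAt (fun s => ⟪ρ s, ρ s⟫) (2 * ⟪D t, ρ t⟫) t := by
      convert h using 1
      show 2 * ⟪D t, ρ t⟫ = ⟪ρ t, D t⟫ + ⟪D t, ρ t⟫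
      rw [real_inner_comm (ρ t) (D t)]; ring
      all_goals rfl
    have heq : (fun s => (⟪ρ s, ρ s⟫ : ℝ)) = F := by
      funext s; exact real_inner_self_eq_norm_sq (ρ s)
    rwa [heq] at h2
  -- the key differential inequality
  have hkey : ∀ t : ℝ, 0 ≤ t → F' t ≤ -(2 * ϖ) * ‖ρ t‖ ^ ((3:ℝ)/2) := by
    intro t ht
    have h1 : ⟪b (x t + ρ t) - b (x t), ρ t⟫ ≤ lam * ‖ρ t‖ ^ 2 := by
      have := hb (x t + ρ t) (x t)
      rwa [add_sub_cancel_left] at this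
    have h2 : (⟪D t, ρ t⟫ : ℝ) = ⟪b (x t + ρ t) - b (x t), ρ t⟫
        - ϖ * ((‖ρ t‖ ^ (-(1/2):ℝ)) * ⟪ρ t, ρ t⟫) - lam * ⟪ρ t, ρ t⟫ := by
      show (⟪b (x t + ρ t) - b (x t) - ϖ • gMap d (ρ t) - lam • ρ t, ρ t⟫ : ℝ) = _
      rw [gMap, inner_sub_left, inner_sub_left, real_inner_smul_left, real_inner_smul_left,
        real_inner_smul_left]
    have h3 : (‖ρ t‖ ^ (-(1/2):ℝ)) * ⟪ρ t, ρ t⟫ = ‖ρ t‖ ^ ((3:ℝ)/2) := by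
      rw [real_inner_self_eq_norm_sq]
      rcases eq_or_ne (ρ t) 0 with h | h
      · rw [h]
        simp only [norm_zero]
        rw [Real.zero_rpow (by norm_num), Real.zero_rpow (by norm_num)]
        ring
      · have hn : (0:ℝ) < ‖ρ t‖ := norm_pos_iff.2 h
        rw [← Real.rpow_natCast ‖ρ t‖ 2, ← Real.rpow_add hn]
        norm_num
    have h4 : (⟪ρ t, ρ t⟫ : ℝ) = ‖ρ t‖ ^ 2 := real_inner_self_eq_norm_sq _
    have h5 : F' t = 2 * ⟪D t, ρ t⟫ := rfl
    rw [h5, h2, h3, h4]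
    nlinarith [h1]
  -- continuity of F on nonneg intervals
  have hFc : ∀ T : ℝ, ContinuousOn F (Icc 0 T) := fun T =>
    fun t htm => ((hF t htm.1).continuousAt).continuousWithinAt
  -- F' is nonpositive
  have hF'neg : ∀ t : ℝ, 0 ≤ t → F' t ≤ 0 := by
    intro t ht
    have h := hkey t ht
    have h2 : (0:ℝ) ≤ 2 * ϖ * ‖ρ t‖ ^ ((3:ℝ)/2) := by positivity
    linarith
  -- F is antitone on [0,1]
  have hanti : AntitoneOn F (Icc (0:ℝ) 1) := by
    apply antitoneOn_of_deriv_nonpos (convex_Icc 0 1) (hFc 1)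
    · intro t htm
      rw [interior_Icc] at htm
      exact ((hF t htm.1.le).differentiableAt).differentiableWithinAt
    · intro t htm
      rw [interior_Icc] at htm
      rw [(hF t htm.1.le).deriv]
      exact hF'neg t htm.1.le
  have hFval : ∀ t : ℝ, ‖ρ t‖ = Real.sqrt (F t) := by
    intro t
    rw [hFdef]
    exact (Real.sqrt_sq (norm_nonneg _)).symm
  -- norms are bounded by the initial one on [0,1]
  have hnorm_le : ∀ t ∈ Icc (0:ℝ) 1, ‖ρ t‖ ≤ q := by
    intro t htm
    have h := hanti (left_mem_Icc.2 zero_le_one) htm htm.1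
    have h1 : q = Real.sqrt (F 0) := by rw [hqdef, hFval 0]
    rw [hFval t, h1]
    exact Real.sqrt_le_sqrt h
  -- comparison: for 0 < c < q^(1/2), F t ≤ (q^(1/2) - c t)^4 on [0,1]
  have hcomp : ∀ c : ℝ, 0 < c → c < q ^ ((1:ℝ)/2) →
      ∀ t ∈ Icc (0:ℝ) 1, F t ≤ (q ^ ((1:ℝ)/2) - c*t)^4 := by
    intro c hc0 hc
    set r : ℝ := q ^ ((1:ℝ)/2) with hrdef
    have hr0 : 0 < r := Real.rpow_pos_of_pos hq0 _
    have hB : ∀ s : ℝ, HasDerivAt (fun u => (r - c*u)^4) (4*(r - c*s)^3 * (-c)) s := by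
      intro s
      have h1 : HasDerivAt (fun u : ℝ => r - c*u) (-c) s := by
        simpa using ((hasDerivAt_id s).const_mul c).const_sub r
      have := h1.pow 4
      convert this using 1
      · rfl
      · rfl
      · rfl
      · norm_num
    apply image_le_of_deriv_right_lt_deriv_boundary'
      (f' := F') (B' := fun s => 4*(r - c*s)^3 * (-c)) (hFc 1)
      (fun s hs => (hF s hs.1).hasDerivWithinAt)
    · -- F 0 ≤ (r - 0)^4
      have hq4 : r ^ (4:ℕ) = q ^ (2:ℕ) := by
        rw [hrdef, ← Real.rpow_natCast (q ^ ((1:ℝ)/2)) 4, ← Real.rpow_mul hq0.le,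
          ← Real.rpow_natCast q 2]
        norm_num
      have hF0 : F 0 = q ^ 2 := by rw [hFdef, hqdef]
      rw [hF0]
      nlinarith [hq4]
    · exact fun s _ => ((hB s).continuousAt).continuousWithinAt
    · exact fun s _ => (hB s).hasDerivWithinAt
    · -- strict inequality at touching points
      intro s hs hFs
      have hu : 0 < r - c*s := by nlinarith [hs.1, hs.2, hc0, hc]
      have hns : ‖ρ s‖ = (r - c*s)^2 := by
        rw [hFval s, hFs]
        have : (r - c*s)^4 = ((r - c*s)^2)^2 := by ring
        rw [this, Real.sqrt_sq (by positivity)]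
      have h32 : ‖ρ s‖ ^ ((3:ℝ)/2) = (r - c*s)^3 := by
        rw [hns, ← Real.rpow_natCast (r - c*s) 2, ← Real.rpow_mul (by positivity),
          ← Real.rpow_natCast (r - c*s) 3]
        norm_num
      have hk := hkey s hs.1
      rw [h32] at hk
      have hu3 : (0:ℝ) < (r - c*s)^3 := by positivity
      have hkey2 : (0:ℝ) < (r - c) * (r - c*s)^3 := mul_pos (by linarith) hu3
      calc F' s ≤ -(2*ϖ) * (r - c*s)^3 := hk
        _ < 4*(r - c*s)^3 * (-c) := by
            rw [hϖdef]
            nlinarith [hkey2]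
  -- conclude ρ 1 = 0
  have hF1 : F 1 = 0 := by
    have hF1nonneg : 0 ≤ F 1 := by rw [hFdef]; positivity
    by_contra h
    have hpos : 0 < F 1 := lt_of_le_of_ne hF1nonneg (Ne.symm h)
    set r : ℝ := q ^ ((1:ℝ)/2) with hrdef
    have hr0 : 0 < r := Real.rpow_pos_of_pos hq0 _
    set δ : ℝ := min (r/2) (min 1 (F 1 / 2)) with hδdef
    have hδ0 : 0 < δ := lt_min (by positivity) (lt_min one_pos (by positivity))
    have hδ1 : δ ≤ 1 := le_trans (min_le_right _ _) (min_le_left _ _)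
    have hδF : δ ≤ F 1 / 2 := le_trans (min_le_right _ _) (min_le_right _ _)
    have hδr : δ < r := lt_of_le_of_lt (min_le_left _ _) (by linarith)
    have hc0 : 0 < r - δ := by linarith
    have hcr : r - δ < r := by linarith
    have h1 := hcomp (r - δ) hc0 hcr 1 (right_mem_Icc.2 zero_le_one)
    have h2 : r - (r - δ) * 1 = δ := by ring
    rw [h2] at h1
    have hδ3 : δ^3 ≤ 1 := pow_le_one₀ hδ0.le hδ1
    nlinarith [h1, hδ3, hδ0, hδF, hpos]
  have hρ1 : ρ 1 = 0 := by
    have h0 : ‖ρ 1‖ ^ 2 = 0 := hF1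
    have h2 : ‖ρ 1‖ = 0 := by nlinarith [norm_nonneg (ρ 1)]
    exact norm_eq_zero.1 h2
  refine ⟨hρ1, ?_⟩
  -- the sup bound
  intro t htm
  have hgn : ‖gMap d (ρ t)‖ ≤ ‖ρ t‖ ^ ((1:ℝ)/2) := by
    rw [gMap, norm_smul, Real.norm_eq_abs, abs_of_nonneg (Real.rpow_nonneg (norm_nonneg _) _)]
    rcases eq_or_ne (ρ t) 0 with h | h
    · rw [h]; simp only [norm_zero, mul_zero]
      positivity
    · have hn : (0:ℝ) < ‖ρ t‖ := norm_pos_iff.2 h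
      rw [show (‖ρ t‖ ^ (-(1/2):ℝ)) * ‖ρ t‖ = ‖ρ t‖ ^ (-(1/2):ℝ) * ‖ρ t‖ ^ (1:ℝ) by
        rw [Real.rpow_one], ← Real.rpow_add hn]
      norm_num
  have hbound1 : ‖ϖ • gMap d (ρ t) + lam • ρ t + ς' t‖ ≤
      ϖ * ‖gMap d (ρ t)‖ + lam * ‖ρ t‖ + ‖ς' t‖ := by
    calc ‖ϖ • gMap d (ρ t) + lam • ρ t + ς' t‖
        ≤ ‖ϖ • gMap d (ρ t) + lam • ρ t‖ + ‖ς' t‖ := norm_add_le _ _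
      _ ≤ (‖ϖ • gMap d (ρ t)‖ + ‖lam • ρ t‖) + ‖ς' t‖ := by
          gcongr; exact norm_add_le _ _
      _ = ϖ * ‖gMap d (ρ t)‖ + lam * ‖ρ t‖ + ‖ς' t‖ := by
          rw [norm_smul, norm_smul, Real.norm_eq_abs, Real.norm_eq_abs,
            abs_of_nonneg hϖ0.le, abs_of_nonneg hlam]
  have hqq : q ^ ((1:ℝ)/2) * q ^ ((1:ℝ)/2) = q := by
    rw [← Real.rpow_add hq0]; norm_num
  have hg2 : ϖ * ‖gMap d (ρ t)‖ ≤ 2 * q := by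
    have hr : ‖ρ t‖ ^ ((1:ℝ)/2) ≤ q ^ ((1:ℝ)/2) :=
      Real.rpow_le_rpow (norm_nonneg _) (hnorm_le t htm) (by norm_num)
    calc ϖ * ‖gMap d (ρ t)‖ ≤ ϖ * (q ^ ((1:ℝ)/2)) := by
          apply mul_le_mul_of_nonneg_left (le_trans hgn hr) hϖ0.le
      _ = 2 * q := by rw [hϖdef]; rw [mul_assoc, hqq]
  have hl2 : lam * ‖ρ t‖ ≤ lam * q := mul_le_mul_of_nonneg_left (hnorm_le t htm) hlam
  have hsup : ‖ς' t‖ ≤ sSup ((fun s => ‖ς' s‖) '' Icc (0:ℝ) 1) := by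
    apply le_csSup
    · exact (isCompact_Icc.image_of_continuousOn hς'.norm).bddAbove
    · exact ⟨t, htm, rfl⟩
  linarith
end

section
/- Let λ ≥ 0 and let b : ℝ^d → ℝ^d be Lipschitz with constant L₀ and satisfy ⟨b(x) − b(y), x − y⟩ ≤ λ|x − y|² for all x, y ∈ ℝ^d. Let x : [0,∞) → ℝ^d be continuous, let ρ : [0,∞) → ℝ^d be differentiable with ϖ := 2|ρ(0)|^{1/2} > 0 and ρ'(t) = b(x(t) + ρ(t)) − b(x(t)) − ϖ g(ρ(t)) − λ ρ(t) for all t ≥ 0, let ς : [0,1] → ℝ^d be twice continuously differentiable, and define φ(t) = ϖ g(ρ(t)) + λ ρ(t) + ς'(t). Then there is a constant C > 0 depending only on L₀ and λ such that: (i) |ρ'(t)| ≤ (L₀ + λ)|ρ(t)| + 2|ρ(0)|^{1/2}|ρ(t)|^{1/2} for all t, and (ii) at every t ∈ [0,1] with ρ(t) ≠ 0 the function φ is differentiable at t and |φ'(t)| ≤ C |ρ(0)| + |ς''(t)|. -/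
open Set
open scoped RealInnerProductSpace

lemma gMap_eq {d : ℕ} (ρ : EuclideanSpace ℝ (Fin d)) :
    gMap d ρ = ((⟪ρ, ρ⟫ : ℝ) ^ (-(1/4) : ℝ)) • ρ := by
  unfold gMap
  congr 1
  rw [real_inner_self_eq_norm_sq, ← Real.rpow_natCast ‖ρ‖ 2,
    ← Real.rpow_mul (norm_nonneg _)]
  norm_num

lemma norm_gMap_le {d : ℕ} (ρ : EuclideanSpace ℝ (Fin d)) :
    ‖gMap d ρ‖ ≤ ‖ρ‖ ^ ((1/2) : ℝ) := by
  unfold gMap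
  rcases eq_or_ne ρ 0 with h | h
  · simp [h]
  · rw [norm_smul, Real.norm_rpow_of_nonneg (norm_nonneg _), norm_norm]
    have hρ : (0:ℝ) < ‖ρ‖ := norm_pos_iff.2 h
    rw [← Real.rpow_add_one hρ.ne' (-(1/2))]
    norm_num

lemma inner_gMap {d : ℕ} (ρ : EuclideanSpace ℝ (Fin d)) :
    (⟪gMap d ρ, ρ⟫ : ℝ) = ‖ρ‖ ^ (-(1/2) : ℝ) * ‖ρ‖ ^ 2 := by
  unfold gMap
  rw [real_inner_smul_left, real_inner_self_eq_norm_sq]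


set_option maxHeartbeats 1600000 in
/-- Second conclusion of Lemma 6.2 (eq:phidotinfty): there is a constant `C > 0`
depending only on the Lipschitz constant `L₀` of `b` and `λ` such that (i) the
derivative of `ρ` satisfies `|ρ'(t)| ≤ (L₀+λ)|ρ(t)| + 2|ρ(0)|^{1/2}|ρ(t)|^{1/2}`,
and (ii) wherever `ρ(t) ≠ 0` on `[0,1]`, the control
`φ = ϖ g(ρ) + λρ + ς'` (with `ϖ = 2|ρ(0)|^{1/2}`) is differentiable with
`|φ'(t)| ≤ C|ρ(0)| + |ς''(t)|`. -/
theorem stmt_6 (d : ℕ) (L₀ : NNReal) (lam : ℝ) (hlam : 0 ≤ lam) :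
    ∃ C > (0:ℝ),
      ∀ (b : EuclideanSpace ℝ (Fin d) → EuclideanSpace ℝ (Fin d)),
        LipschitzWith L₀ b →
        (∀ x y : EuclideanSpace ℝ (Fin d), ⟪b x - b y, x - y⟫ ≤ lam * ‖x - y‖ ^ 2) →
        ∀ (x ρ : ℝ → EuclideanSpace ℝ (Fin d)), Continuous x → ρ 0 ≠ 0 →
        (∀ t, 0 ≤ t →
          HasDerivAt ρ (b (x t + ρ t) - b (x t)
            - (2 * ‖ρ 0‖ ^ (1/2 : ℝ)) • gMap d (ρ t) - lam • ρ t) t) →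
        ∀ (ς ς' ς'' : ℝ → EuclideanSpace ℝ (Fin d)),
          (∀ t ∈ Icc (0:ℝ) 1, HasDerivAt ς (ς' t) t) →
          (∀ t ∈ Icc (0:ℝ) 1, HasDerivAt ς' (ς'' t) t) →
          ContinuousOn ς'' (Icc 0 1) →
          (∀ t, 0 ≤ t →
            ‖b (x t + ρ t) - b (x t)
                - (2 * ‖ρ 0‖ ^ (1/2 : ℝ)) • gMap d (ρ t) - lam • ρ t‖ ≤
              ((L₀ : ℝ) + lam) * ‖ρ t‖ + 2 * ‖ρ 0‖ ^ (1/2 : ℝ) * ‖ρ t‖ ^ (1/2 : ℝ)) ∧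
          (∀ t ∈ Icc (0:ℝ) 1, ρ t ≠ 0 →
            ∃ φ' : EuclideanSpace ℝ (Fin d),
              HasDerivAt (fun s =>
                (2 * ‖ρ 0‖ ^ (1/2 : ℝ)) • gMap d (ρ s) + lam • ρ s + ς' s) φ' t ∧
              ‖φ'‖ ≤ C * ‖ρ 0‖ + ‖ς'' t‖) := by
  refine ⟨3 * ((L₀:ℝ) + lam) + 6 + lam * ((L₀:ℝ) + lam + 2), by positivity, ?_⟩
  intro b hb hmono x ρ hx hρ0 hρ ς ς' ς'' hς hς' hς''c
  have hr0 : (0:ℝ) < ‖ρ 0‖ := norm_pos_iff.2 hρ0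
  set ϖ : ℝ := 2 * ‖ρ 0‖ ^ (1/2 : ℝ) with hϖdef
  have hϖpos : 0 < ϖ := by
    have := Real.rpow_pos_of_pos hr0 (1/2 : ℝ); positivity
  set D : ℝ → EuclideanSpace ℝ (Fin d) := fun s =>
    b (x s + ρ s) - b (x s) - ϖ • gMap d (ρ s) - lam • ρ s with hDdef
  -- part (i)
  have hbound : ∀ t, 0 ≤ t →
      ‖D t‖ ≤ ((L₀:ℝ) + lam) * ‖ρ t‖ + ϖ * ‖ρ t‖ ^ (1/2 : ℝ) := by
    intro t ht
    have h1 : ‖b (x t + ρ t) - b (x t)‖ ≤ (L₀:ℝ) * ‖ρ t‖ := by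
      have := hb.dist_le_mul (x t + ρ t) (x t)
      simpa [dist_eq_norm, add_sub_cancel_left] using this
    have h2 : ‖ϖ • gMap d (ρ t)‖ ≤ ϖ * ‖ρ t‖ ^ (1/2 : ℝ) := by
      rw [norm_smul, Real.norm_eq_abs, abs_of_pos hϖpos]
      exact mul_le_mul_of_nonneg_left (norm_gMap_le _) hϖpos.le
    have h3 : ‖lam • ρ t‖ = lam * ‖ρ t‖ := by
      rw [norm_smul, Real.norm_eq_abs, abs_of_nonneg hlam]
    have h4 : ‖D t‖ ≤ ‖b (x t + ρ t) - b (x t)‖ + ‖ϖ • gMap d (ρ t)‖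
        + ‖lam • ρ t‖ := by
      calc ‖D t‖ ≤ ‖b (x t + ρ t) - b (x t) - ϖ • gMap d (ρ t)‖ + ‖lam • ρ t‖ :=
            norm_sub_le _ _
        _ ≤ _ := by
            have := norm_sub_le (b (x t + ρ t) - b (x t)) (ϖ • gMap d (ρ t))
            linarith
    linarith
  -- dissipativity: ⟪ρ t, D t⟫ ≤ 0 for t ≥ 0
  have hdiss : ∀ t, (⟪D t, ρ t⟫ : ℝ) ≤ 0 := by
    intro t
    have hm : (⟪b (x t + ρ t) - b (x t), ρ t⟫ : ℝ) ≤ lam * ‖ρ t‖ ^ 2 := by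
      have := hmono (x t + ρ t) (x t)
      simpa [add_sub_cancel_left] using this
    have hg : (0:ℝ) ≤ ⟪ϖ • gMap d (ρ t), ρ t⟫ := by
      rw [real_inner_smul_left, inner_gMap]
      positivity
    have hl : (⟪lam • ρ t, ρ t⟫ : ℝ) = lam * ‖ρ t‖ ^ 2 := by
      rw [real_inner_smul_left, real_inner_self_eq_norm_sq]
    have : (⟪D t, ρ t⟫ : ℝ) = ⟪b (x t + ρ t) - b (x t), ρ t⟫
        - ⟪ϖ • gMap d (ρ t), ρ t⟫ - ⟪lam • ρ t, ρ t⟫ := by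
      simp only [hDdef, inner_sub_left]
    rw [this, hl]
    linarith
  -- monotonicity of the norm
  have hmon : ∀ t ∈ Icc (0:ℝ) 1, ‖ρ t‖ ≤ ‖ρ 0‖ := by
    intro t ht
    have hanti : AntitoneOn (fun s => (⟪ρ s, ρ s⟫ : ℝ)) (Icc (0:ℝ) 1) := by
      apply antitoneOn_of_deriv_nonpos (convex_Icc 0 1)
      · intro s hs
        exact (((hρ s hs.1).inner ℝ (hρ s hs.1)).continuousAt).continuousWithinAt
      · intro s hs
        rw [interior_Icc] at hs
        exact ((hρ s hs.1.le).inner ℝ (hρ s hs.1.le)).differentiableAt.differentiableWithinAt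
      · intro s hs
        rw [interior_Icc] at hs
        rw [((hρ s hs.1.le).inner ℝ (hρ s hs.1.le)).deriv]
        have h1 := hdiss s
        have h2 : (⟪ρ s, D s⟫ : ℝ) = ⟪D s, ρ s⟫ := real_inner_comm _ _
        linarith
    have h0 : (0:ℝ) ∈ Icc (0:ℝ) 1 := ⟨le_refl _, zero_le_one⟩
    have := hanti h0 ht ht.1
    simp only [real_inner_self_eq_norm_sq] at this
    exact le_of_pow_le_pow_left₀ two_ne_zero (norm_nonneg _) this
  refine ⟨hbound, ?_⟩
  -- part (ii)
  intro t ht hne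
  have hr : (0:ℝ) < ‖ρ t‖ := norm_pos_iff.2 hne
  set r : ℝ := ‖ρ t‖ with hrdef
  set r0 : ℝ := ‖ρ 0‖ with hr0def
  have hipos : (0:ℝ) < ⟪ρ t, ρ t⟫ := by
    rw [real_inner_self_eq_norm_sq]; positivity
  have hdρ : HasDerivAt ρ (D t) t := hρ t ht.1
  have hn : HasDerivAt (fun s => (⟪ρ s, ρ s⟫ : ℝ)) (⟪ρ t, D t⟫ + ⟪D t, ρ t⟫) t :=
    (hρ t ht.1).inner ℝ (hρ t ht.1)
  have hq : HasDerivAt (fun s => (⟪ρ s, ρ s⟫ : ℝ) ^ (-(1/4) : ℝ))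
      (((⟪ρ t, D t⟫ : ℝ) + ⟪D t, ρ t⟫) * (-(1/4)) * (⟪ρ t, ρ t⟫ : ℝ) ^ ((-(1/4) : ℝ) - 1)) t :=
    hn.rpow_const (Or.inl hipos.ne')
  have hg : HasDerivAt (fun s => ((⟪ρ s, ρ s⟫ : ℝ) ^ (-(1/4) : ℝ)) • ρ s)
      (((⟪ρ t, ρ t⟫ : ℝ) ^ (-(1/4) : ℝ)) • D t
        + (((⟪ρ t, D t⟫ : ℝ) + ⟪D t, ρ t⟫) * (-(1/4))
            * (⟪ρ t, ρ t⟫ : ℝ) ^ ((-(1/4) : ℝ) - 1)) • ρ t) t :=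
    hq.smul hdρ
  refine ⟨ϖ • (((⟪ρ t, ρ t⟫ : ℝ) ^ (-(1/4) : ℝ)) • D t
        + (((⟪ρ t, D t⟫ : ℝ) + ⟪D t, ρ t⟫) * (-(1/4))
            * (⟪ρ t, ρ t⟫ : ℝ) ^ ((-(1/4) : ℝ) - 1)) • ρ t)
      + lam • D t + ς'' t, ?_, ?_⟩
  · have heq : (fun s => ϖ • gMap d (ρ s) + lam • ρ s + ς' s)
        = fun s => ϖ • (((⟪ρ s, ρ s⟫ : ℝ) ^ (-(1/4) : ℝ)) • ρ s) + lam • ρ s + ς' s := by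
      funext s; rw [gMap_eq]
    rw [heq]
    exact ((hg.const_smul ϖ).add (hdρ.const_smul lam)).add (hς' t ht)
  · -- norm bound
    -- rpow identities
    have e1 : (⟪ρ t, ρ t⟫ : ℝ) ^ (-(1/4) : ℝ) = r ^ (-(1/2) : ℝ) := by
      rw [real_inner_self_eq_norm_sq, ← Real.rpow_natCast ‖ρ t‖ 2,
        ← Real.rpow_mul (norm_nonneg _)]
      norm_num
      rfl
    have e2 : (⟪ρ t, ρ t⟫ : ℝ) ^ ((-(1/4) : ℝ) - 1) = r ^ (-(5/2) : ℝ) := by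
      rw [real_inner_self_eq_norm_sq, ← Real.rpow_natCast ‖ρ t‖ 2,
        ← Real.rpow_mul (norm_nonneg _)]
      norm_num
      rfl
    have e3 : r * r ^ (-(5/2) : ℝ) * r = r ^ (-(1/2) : ℝ) := by
      rw [show r * r ^ (-(5/2) : ℝ) * r
          = r ^ (1:ℝ) * r ^ (-(5/2) : ℝ) * r ^ (1:ℝ) by rw [Real.rpow_one],
        ← Real.rpow_add hr, ← Real.rpow_add hr]
      norm_num
    have e4 : r ^ (-(1/2) : ℝ) * r = r ^ ((1/2) : ℝ) := by
      rw [show r ^ (-(1/2) : ℝ) * r = r ^ (-(1/2) : ℝ) * r ^ (1:ℝ) by rw [Real.rpow_one],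
        ← Real.rpow_add hr]
      norm_num
    have e5 : r ^ (-(1/2) : ℝ) * r ^ ((1/2) : ℝ) = 1 := by
      rw [← Real.rpow_add hr]
      norm_num
    have e6 : r0 ^ ((1/2) : ℝ) * r0 ^ ((1/2) : ℝ) = r0 := by
      rw [← Real.rpow_add hr0]
      norm_num
    set R' : ℝ := ‖D t‖ with hR'def
    have hR'0 : 0 ≤ R' := norm_nonneg _
    have hm12 : (0:ℝ) ≤ r ^ (-(1/2) : ℝ) := Real.rpow_nonneg hr.le _
    -- |q'| bound
    have hq'abs : |((⟪ρ t, D t⟫ : ℝ) + ⟪D t, ρ t⟫) * (-(1/4))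
        * (⟪ρ t, ρ t⟫ : ℝ) ^ ((-(1/4) : ℝ) - 1)| * ‖ρ t‖
        ≤ (1/2) * R' * r ^ (-(1/2) : ℝ) := by
      rw [e2, abs_mul, abs_mul]
      have hsum : |(⟪ρ t, D t⟫ : ℝ) + ⟪D t, ρ t⟫| ≤ 2 * r * R' := by
        have i1 := abs_real_inner_le_norm (ρ t) (D t)
        have i2 := abs_real_inner_le_norm (D t) (ρ t)
        calc |(⟪ρ t, D t⟫ : ℝ) + ⟪D t, ρ t⟫| ≤ |(⟪ρ t, D t⟫ : ℝ)| + |(⟪D t, ρ t⟫ : ℝ)| :=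
              abs_add_le _ _
          _ ≤ 2 * r * R' := by rw [hrdef, hR'def]; nlinarith
      have habs2 : |r ^ (-(5/2) : ℝ)| = r ^ (-(5/2) : ℝ) :=
        abs_of_nonneg (Real.rpow_nonneg hr.le _)
      rw [habs2]
      have h5 : (0:ℝ) ≤ r ^ (-(5/2) : ℝ) := Real.rpow_nonneg hr.le _
      calc |(⟪ρ t, D t⟫ : ℝ) + ⟪D t, ρ t⟫| * |(-(1/4) : ℝ)| * r ^ (-(5/2) : ℝ) * ‖ρ t‖
          ≤ (2 * r * R') * (1/4) * r ^ (-(5/2) : ℝ) * r := by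
            rw [show |(-(1/4) : ℝ)| = 1/4 by norm_num, ← hrdef]
            have : (0:ℝ) ≤ r := hr.le
            gcongr
        _ = (1/2) * R' * (r * r ^ (-(5/2) : ℝ) * r) := by ring
        _ = (1/2) * R' * r ^ (-(1/2) : ℝ) := by rw [e3]
    -- main norm estimate
    have key1 : ‖ϖ • (((⟪ρ t, ρ t⟫ : ℝ) ^ (-(1/4) : ℝ)) • D t
        + (((⟪ρ t, D t⟫ : ℝ) + ⟪D t, ρ t⟫) * (-(1/4))
            * (⟪ρ t, ρ t⟫ : ℝ) ^ ((-(1/4) : ℝ) - 1)) • ρ t)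
      + lam • D t + ς'' t‖
        ≤ ϖ * (r ^ (-(1/2) : ℝ) * R' + (1/2) * R' * r ^ (-(1/2) : ℝ)) + lam * R' + ‖ς'' t‖ := by
      calc ‖_ + lam • D t + ς'' t‖
          ≤ ‖ϖ • (((⟪ρ t, ρ t⟫ : ℝ) ^ (-(1/4) : ℝ)) • D t
            + (((⟪ρ t, D t⟫ : ℝ) + ⟪D t, ρ t⟫) * (-(1/4))
                * (⟪ρ t, ρ t⟫ : ℝ) ^ ((-(1/4) : ℝ) - 1)) • ρ t)‖
            + ‖lam • D t‖ + ‖ς'' t‖ := by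
            exact (norm_add_le _ _).trans (by
              have := norm_add_le (ϖ • (((⟪ρ t, ρ t⟫ : ℝ) ^ (-(1/4) : ℝ)) • D t
                + (((⟪ρ t, D t⟫ : ℝ) + ⟪D t, ρ t⟫) * (-(1/4))
                    * (⟪ρ t, ρ t⟫ : ℝ) ^ ((-(1/4) : ℝ) - 1)) • ρ t)) (lam • D t)
              linarith)
        _ ≤ ϖ * (r ^ (-(1/2) : ℝ) * R' + (1/2) * R' * r ^ (-(1/2) : ℝ)) + lam * R' + ‖ς'' t‖ := by
            have hsmul1 : ‖lam • D t‖ = lam * R' := by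
              rw [norm_smul, Real.norm_eq_abs, abs_of_nonneg hlam]
            have hinner : ‖(((⟪ρ t, ρ t⟫ : ℝ) ^ (-(1/4) : ℝ)) • D t
                + (((⟪ρ t, D t⟫ : ℝ) + ⟪D t, ρ t⟫) * (-(1/4))
                    * (⟪ρ t, ρ t⟫ : ℝ) ^ ((-(1/4) : ℝ) - 1)) • ρ t)‖
                ≤ r ^ (-(1/2) : ℝ) * R' + (1/2) * R' * r ^ (-(1/2) : ℝ) := by
              calc _ ≤ ‖(((⟪ρ t, ρ t⟫ : ℝ) ^ (-(1/4) : ℝ)) • D t)‖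
                    + ‖((((⟪ρ t, D t⟫ : ℝ) + ⟪D t, ρ t⟫) * (-(1/4))
                        * (⟪ρ t, ρ t⟫ : ℝ) ^ ((-(1/4) : ℝ) - 1)) • ρ t)‖ := norm_add_le _ _
                _ ≤ r ^ (-(1/2) : ℝ) * R' + (1/2) * R' * r ^ (-(1/2) : ℝ) := by
                    rw [norm_smul, norm_smul, Real.norm_eq_abs, Real.norm_eq_abs]
                    have : |(⟪ρ t, ρ t⟫ : ℝ) ^ (-(1/4) : ℝ)| = r ^ (-(1/2) : ℝ) := by
                      rw [e1]; exact abs_of_nonneg hm12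
                    rw [this]
                    exact add_le_add (le_refl _) hq'abs
            rw [norm_smul, Real.norm_eq_abs, abs_of_pos hϖpos, hsmul1]
            have := mul_le_mul_of_nonneg_left hinner hϖpos.le
            linarith
    -- combine
    have hrr0 : r ≤ r0 := hmon t ht
    have hs : r ^ ((1/2) : ℝ) ≤ r0 ^ ((1/2) : ℝ) :=
      Real.rpow_le_rpow hr.le hrr0 (by norm_num)
    have hs0 : (0:ℝ) ≤ r0 ^ ((1/2) : ℝ) := Real.rpow_nonneg hr0.le _
    have hR' : R' ≤ ((L₀:ℝ) + lam) * r + ϖ * r ^ ((1/2) : ℝ) := hbound t ht.1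
    have key2 : r ^ (-(1/2) : ℝ) * R' ≤ ((L₀:ℝ) + lam) * r ^ ((1/2) : ℝ) + ϖ := by
      calc r ^ (-(1/2) : ℝ) * R'
          ≤ r ^ (-(1/2) : ℝ) * (((L₀:ℝ) + lam) * r + ϖ * r ^ ((1/2) : ℝ)) :=
            mul_le_mul_of_nonneg_left hR' hm12
        _ = ((L₀:ℝ) + lam) * (r ^ (-(1/2) : ℝ) * r)
            + ϖ * (r ^ (-(1/2) : ℝ) * r ^ ((1/2) : ℝ)) := by ring
        _ = ((L₀:ℝ) + lam) * r ^ ((1/2) : ℝ) + ϖ := by rw [e4, e5, mul_one]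
    have hLlam : (0:ℝ) ≤ (L₀:ℝ) + lam := by positivity
    have key2' : r ^ (-(1/2) : ℝ) * R' ≤ ((L₀:ℝ) + lam) * r0 ^ ((1/2) : ℝ)
        + 2 * r0 ^ ((1/2) : ℝ) := by
      have : ((L₀:ℝ) + lam) * r ^ ((1/2) : ℝ) ≤ ((L₀:ℝ) + lam) * r0 ^ ((1/2) : ℝ) :=
        mul_le_mul_of_nonneg_left hs hLlam
      rw [hϖdef] at key2
      linarith [key2]
    have hR'' : R' ≤ ((L₀:ℝ) + lam) * r0 + 2 * r0 := by
      have h1 : ϖ * r ^ ((1/2) : ℝ) ≤ ϖ * r0 ^ ((1/2) : ℝ) :=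
        mul_le_mul_of_nonneg_left hs hϖpos.le
      have h2 : ((L₀:ℝ) + lam) * r ≤ ((L₀:ℝ) + lam) * r0 :=
        mul_le_mul_of_nonneg_left hrr0 hLlam
      have h3 : ϖ * r0 ^ ((1/2) : ℝ) = 2 * r0 := by
        rw [hϖdef, mul_assoc, e6]
      linarith
    have hmul1 : (3 * r0 ^ ((1/2) : ℝ)) * (r ^ (-(1/2) : ℝ) * R')
        ≤ (3 * r0 ^ ((1/2) : ℝ)) * (((L₀:ℝ) + lam) * r0 ^ ((1/2) : ℝ)
            + 2 * r0 ^ ((1/2) : ℝ)) :=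
      mul_le_mul_of_nonneg_left key2' (by positivity)
    have hmul2 : lam * R' ≤ lam * (((L₀:ℝ) + lam) * r0 + 2 * r0) :=
      mul_le_mul_of_nonneg_left hR'' hlam
    have hmul1' : (3 * r0 ^ ((1/2) : ℝ)) * (r ^ (-(1/2) : ℝ) * R')
        ≤ (3 * ((L₀:ℝ) + lam) + 6) * r0 := by
      calc (3 * r0 ^ ((1/2) : ℝ)) * (r ^ (-(1/2) : ℝ) * R')
          ≤ (3 * r0 ^ ((1/2) : ℝ)) * (((L₀:ℝ) + lam) * r0 ^ ((1/2) : ℝ)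
              + 2 * r0 ^ ((1/2) : ℝ)) := hmul1
        _ = (3 * ((L₀:ℝ) + lam) + 6) * (r0 ^ ((1/2) : ℝ) * r0 ^ ((1/2) : ℝ)) := by ring
        _ = _ := by rw [e6]
    refine key1.trans ?_
    rw [hϖdef]
    have hexp : 2 * r0 ^ ((1/2) : ℝ) * (r ^ (-(1/2) : ℝ) * R'
          + 1/2 * R' * r ^ (-(1/2) : ℝ))
        = (3 * r0 ^ ((1/2) : ℝ)) * (r ^ (-(1/2) : ℝ) * R') := by ring
    rw [hexp]
    nlinarith [hmul1', hmul2]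
end

section
/- Let b : ℝ^d → ℝ^d be Lipschitz continuous, let λ ≥ 0, let x : [0,∞) → ℝ^d be continuous, let ϖ > 0 and let ρ₀ ∈ ℝ^d. Then the ordinary differential equation ρ'(t) = b(x(t) + ρ(t)) − b(x(t)) − ϖ g(ρ(t)) − λ ρ(t), with initial condition ρ(0) = ρ₀, admits exactly one differentiable solution ρ : [0,∞) → ℝ^d. -/
open Set

set_option maxHeartbeats 1600000

namespace Stmt7

variable {d : ℕ}
local notation "E" => EuclideanSpace ℝ (Fin d)
local notation "⟪" x ", " y "⟫" => @inner ℝ _ _ x y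

lemma gMap_eq (ρ : E) : gMap d ρ = (Real.sqrt ‖ρ‖)⁻¹ • ρ := by
  rw [gMap, Real.rpow_neg (norm_nonneg ρ), ← Real.sqrt_eq_rpow]

lemma norm_gMap (ρ : E) : ‖gMap d ρ‖ = Real.sqrt ‖ρ‖ := by
  rw [gMap_eq, norm_smul, norm_inv, Real.norm_eq_abs,
    abs_of_nonneg (Real.sqrt_nonneg _), ← div_eq_inv_mul, Real.div_sqrt]

lemma inner_gMap_self (ρ : E) : ⟪gMap d ρ, ρ⟫ = Real.sqrt ‖ρ‖ * ‖ρ‖ := by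
  rw [gMap_eq, real_inner_smul_left, real_inner_self_eq_norm_mul_norm,
    ← mul_assoc, ← div_eq_inv_mul, Real.div_sqrt]

lemma gMap_monotone (a b : E) : 0 ≤ ⟪gMap d a - gMap d b, a - b⟫ := by
  have h3 : ⟪gMap d a, b⟫ ≤ Real.sqrt ‖a‖ * ‖b‖ := by
    simpa [norm_gMap] using real_inner_le_norm (gMap d a) b
  have h4 : ⟪gMap d b, a⟫ ≤ Real.sqrt ‖b‖ * ‖a‖ := by
    simpa [norm_gMap] using real_inner_le_norm (gMap d b) a
  have expand : ⟪gMap d a - gMap d b, a - b⟫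
      = ⟪gMap d a, a⟫ - ⟪gMap d a, b⟫ - ⟪gMap d b, a⟫ + ⟪gMap d b, b⟫ := by
    rw [inner_sub_left, inner_sub_right, inner_sub_right]; ring
  rw [expand, inner_gMap_self, inner_gMap_self]
  rcases le_total ‖a‖ ‖b‖ with h | h
  · have hs : Real.sqrt ‖a‖ ≤ Real.sqrt ‖b‖ := Real.sqrt_le_sqrt h
    nlinarith [Real.sqrt_nonneg ‖a‖, Real.sqrt_nonneg ‖b‖]
  · have hs : Real.sqrt ‖b‖ ≤ Real.sqrt ‖a‖ := Real.sqrt_le_sqrt h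
    nlinarith [Real.sqrt_nonneg ‖a‖, Real.sqrt_nonneg ‖b‖]

lemma continuous_gMap : Continuous (gMap d) := by
  rw [continuous_iff_continuousAt]
  intro a
  rcases eq_or_ne a 0 with rfl | ha
  · rw [ContinuousAt]
    have h0 : gMap d (0 : E) = 0 := by simp [gMap]
    rw [h0]
    apply squeeze_zero_norm (fun ρ => (norm_gMap ρ).le)
    have : ContinuousAt (fun ρ : E => Real.sqrt ‖ρ‖) 0 :=
      (Real.continuous_sqrt.comp continuous_norm).continuousAt
    have h1 : Real.sqrt ‖(0:E)‖ = 0 := by simp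
    simpa [ContinuousAt, h1] using this
  · have hn : ‖a‖ ≠ 0 := norm_ne_zero_iff.mpr ha
    have : ContinuousAt (fun ρ : E => (‖ρ‖ ^ (-(1/2) : ℝ))) a := by
      exact (Real.continuousAt_rpow_const _ _ (Or.inl hn)).comp continuous_norm.continuousAt
    exact this.smul continuousAt_id

/-- Lipschitz regularization of `gMap`. -/
noncomputable def gA (d : ℕ) (ε : ℝ) (ρ : EuclideanSpace ℝ (Fin d)) : EuclideanSpace ℝ (Fin d) :=
  (Real.sqrt (max ‖ρ‖ ε))⁻¹ • ρ

lemma gA_lipschitz {ε : ℝ} (hε : 0 < ε) :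
    LipschitzWith (Real.toNNReal (2 / Real.sqrt ε)) (gA d ε) := by
  have hsε : 0 < Real.sqrt ε := Real.sqrt_pos.mpr hε
  apply LipschitzWith.of_dist_le_mul
  intro a b
  simp only [dist_eq_norm, Real.coe_toNNReal _ (by positivity : (0:ℝ) ≤ 2 / Real.sqrt ε)]
  set ma := max ‖a‖ ε with hma
  set mb := max ‖b‖ ε with hmb
  have hma0 : 0 < ma := lt_max_of_lt_right hε
  have hmb0 : 0 < mb := lt_max_of_lt_right hε
  set sa := Real.sqrt ma with hsa
  set sb := Real.sqrt mb with hsb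
  have hsa0 : 0 < sa := Real.sqrt_pos.mpr hma0
  have hsb0 : 0 < sb := Real.sqrt_pos.mpr hmb0
  have hsaε : Real.sqrt ε ≤ sa := Real.sqrt_le_sqrt (le_max_right _ _)
  have hsbε : Real.sqrt ε ≤ sb := Real.sqrt_le_sqrt (le_max_right _ _)
  have hsa2 : sa ^ 2 = ma := Real.sq_sqrt hma0.le
  have hsb2 : sb ^ 2 = mb := Real.sq_sqrt hmb0.le
  have hsplit : gA d ε a - gA d ε b = sa⁻¹ • (a - b) + (sa⁻¹ - sb⁻¹) • b := by
    simp only [gA, ← hma, ← hmb, ← hsa, ← hsb, smul_sub, sub_smul]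
    abel
  have hmm : |ma - mb| ≤ ‖a - b‖ := by
    have h1 : |ma - mb| ≤ |‖a‖ - ‖b‖| := abs_max_sub_max_le_abs _ _ _
    exact h1.trans (abs_norm_sub_norm_le a b)
  have hss : |sa - sb| * (sa + sb) ≤ ‖a - b‖ := by
    have : |sa - sb| * (sa + sb) = |ma - mb| := by
      rw [← abs_of_pos (show (0:ℝ) < sa + sb by positivity), ← abs_mul]
      congr 1
      nlinarith
    rw [this]; exact hmm
  have hinv : |sa⁻¹ - sb⁻¹| = |sa - sb| / (sa * sb) := by
    have h : sa⁻¹ - sb⁻¹ = (sb - sa) / (sa * sb) := by field_simp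
    rw [h, abs_div, abs_of_pos (mul_pos hsa0 hsb0), abs_sub_comm]
  have hbs : ‖b‖ ≤ sb ^ 2 := by rw [hsb2]; exact le_max_left _ _
  have hterm2 : |sa⁻¹ - sb⁻¹| * ‖b‖ ≤ (Real.sqrt ε)⁻¹ * ‖a - b‖ := by
    rw [hinv, div_mul_eq_mul_div, div_le_iff₀ (by positivity), inv_mul_eq_div,
      div_mul_eq_mul_div, le_div_iff₀ hsε]
    calc |sa - sb| * ‖b‖ * Real.sqrt ε ≤ |sa - sb| * sb ^ 2 * Real.sqrt ε := by
          exact mul_le_mul_of_nonneg_right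
            (mul_le_mul_of_nonneg_left hbs (abs_nonneg (sa - sb))) hsε.le
      _ ≤ |sa - sb| * sb ^ 2 * sa := mul_le_mul_of_nonneg_left hsaε (by positivity)
      _ = (|sa - sb| * sa * sb) * sb := by ring
      _ ≤ (|sa - sb| * sa * sb) * (sa + sb) :=
          mul_le_mul_of_nonneg_left (by linarith) (by positivity)
      _ = (|sa - sb| * (sa + sb)) * (sa * sb) := by ring
      _ ≤ ‖a - b‖ * (sa * sb) := mul_le_mul_of_nonneg_right hss (by positivity)
  have hterm1 : ‖sa⁻¹ • (a - b)‖ ≤ (Real.sqrt ε)⁻¹ * ‖a - b‖ := by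
    rw [norm_smul, Real.norm_eq_abs, abs_of_pos (by positivity)]
    apply mul_le_mul_of_nonneg_right _ (norm_nonneg _)
    exact inv_anti₀ hsε hsaε
  calc ‖gA d ε a - gA d ε b‖ ≤ ‖sa⁻¹ • (a - b)‖ + ‖(sa⁻¹ - sb⁻¹) • b‖ := by
        rw [hsplit]; exact norm_add_le _ _
    _ ≤ (Real.sqrt ε)⁻¹ * ‖a - b‖ + (Real.sqrt ε)⁻¹ * ‖a - b‖ := by
        apply add_le_add hterm1
        rw [norm_smul, Real.norm_eq_abs]; exact hterm2
    _ = 2 / Real.sqrt ε * ‖a - b‖ := by ring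

lemma gA_approx {ε : ℝ} (hε : 0 ≤ ε) (ρ : E) :
    ‖gA d ε ρ - gMap d ρ‖ ≤ 2 * Real.sqrt ε := by
  rcases le_total ε ‖ρ‖ with h | h
  · have : gA d ε ρ = gMap d ρ := by rw [gA, gMap_eq, max_eq_left h]
    rw [this, sub_self, norm_zero]
    positivity
  · have h1 : ‖gA d ε ρ‖ ≤ Real.sqrt ε := by
      rw [gA, max_eq_right h, norm_smul, Real.norm_eq_abs,
        abs_of_nonneg (by positivity)]
      rcases eq_or_lt_of_le hε with rfl | hε'
      · simp
      · rw [inv_mul_le_iff₀ (Real.sqrt_pos.mpr hε')]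
        calc ‖ρ‖ ≤ ε := h
          _ = Real.sqrt ε * Real.sqrt ε := (Real.mul_self_sqrt hε).symm
    have h2 : ‖gMap d ρ‖ ≤ Real.sqrt ε := by
      rw [norm_gMap]; exact Real.sqrt_le_sqrt h
    calc ‖gA d ε ρ - gMap d ρ‖ ≤ ‖gA d ε ρ‖ + ‖gMap d ρ‖ := norm_sub_le _ _
      _ ≤ 2 * Real.sqrt ε := by linarith

lemma gA_norm_le {ε M : ℝ} (hε : 0 < ε) (hε1 : ε ≤ 1) {ρ : E} (hρ : ‖ρ‖ ≤ M) :
    ‖gA d ε ρ‖ ≤ Real.sqrt (max M 1) := by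
  have h1 : max ‖ρ‖ ε ≤ max M 1 := max_le_max hρ hε1
  rw [gA, norm_smul, Real.norm_eq_abs, abs_of_nonneg (by positivity),
    inv_mul_le_iff₀ (Real.sqrt_pos.mpr (lt_max_of_lt_right hε))]
  calc ‖ρ‖ ≤ max ‖ρ‖ ε := le_max_left _ _
    _ = Real.sqrt (max ‖ρ‖ ε) * Real.sqrt (max ‖ρ‖ ε) :=
        (Real.mul_self_sqrt (by positivity)).symm
    _ ≤ Real.sqrt (max ‖ρ‖ ε) * Real.sqrt (max M 1) :=
        mul_le_mul_of_nonneg_left (Real.sqrt_le_sqrt h1) (Real.sqrt_nonneg _)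

/-- Key Grönwall-type comparison estimate between two (approximate) solutions. -/
lemma key_estimate {b : E → E} {L : NNReal} (hb : LipschitzWith L b)
    {lam ϖ : ℝ} (hlam : 0 ≤ lam) (hϖ : 0 ≤ ϖ)
    {G1 G2 : E → E} {e1 e2 : ℝ}
    (hG1 : ∀ ρ, ‖G1 ρ - gMap d ρ‖ ≤ e1) (hG2 : ∀ ρ, ‖G2 ρ - gMap d ρ‖ ≤ e2)
    {x : ℝ → E} {f1 f2 : ℝ → E} {T : ℝ}
    (h1c : ContinuousOn f1 (Icc 0 T)) (h2c : ContinuousOn f2 (Icc 0 T))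
    (h1d : ∀ t ∈ Ico (0:ℝ) T, HasDerivWithinAt f1
      (b (x t + f1 t) - b (x t) - ϖ • G1 (f1 t) - lam • f1 t) (Ici t) t)
    (h2d : ∀ t ∈ Ico (0:ℝ) T, HasDerivWithinAt f2
      (b (x t + f2 t) - b (x t) - ϖ • G2 (f2 t) - lam • f2 t) (Ici t) t)
    (h0 : f1 0 = f2 0) :
    ∀ t ∈ Icc (0:ℝ) T, ‖f1 t - f2 t‖ ^ 2 ≤
      gronwallBound 0 (2 * L + 1) ((ϖ * (e1 + e2)) ^ 2) t := by
  set w : ℝ → E := fun t => f1 t - f2 t with hw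
  set v : ℝ → E := fun t =>
    (b (x t + f1 t) - b (x t) - ϖ • G1 (f1 t) - lam • f1 t) -
    (b (x t + f2 t) - b (x t) - ϖ • G2 (f2 t) - lam • f2 t) with hv
  have hwd : ∀ t ∈ Ico (0:ℝ) T, HasDerivWithinAt w (v t) (Ici t) t :=
    fun t ht => (h1d t ht).sub (h2d t ht)
  set φ : ℝ → ℝ := fun t => ⟪w t, w t⟫ with hφ
  set D : ℝ → ℝ := fun t => ⟪w t, v t⟫ + ⟪v t, w t⟫ with hD
  have hφd : ∀ t ∈ Ico (0:ℝ) T, HasDerivWithinAt φ (D t) (Ici t) t :=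
    fun t ht => (hwd t ht).inner ℝ (hwd t ht)
  have hφc : ContinuousOn φ (Icc 0 T) := by
    exact ((h1c.sub h2c).inner (h1c.sub h2c))
  have key : ∀ t ∈ Icc (0:ℝ) T,
      φ t ≤ gronwallBound 0 (2 * L + 1) ((ϖ * (e1 + e2)) ^ 2) (t - 0) := by
    apply le_gronwallBound_of_liminf_deriv_right_le hφc
      (fun t ht r hr => (hφd t ht).liminf_right_slope_le hr)
    · simp [hφ, hw, h0]
    · intro t ht
      set A := b (x t + f1 t) - b (x t + f2 t) with hA
      set B := gMap d (f1 t) - gMap d (f2 t) with hB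
      set C := (G1 (f1 t) - gMap d (f1 t)) - (G2 (f2 t) - gMap d (f2 t)) with hC
      -- the crucial bound on D t
      have hwv : ⟪w t, v t⟫ ≤ (L : ℝ) * ‖w t‖ ^ 2 + ϖ * (e1 + e2) * ‖w t‖ := by
        have hv_split : v t = A - ϖ • B - ϖ • C - lam • w t := by
          rw [hA, hB, hC]
          simp only [hv, hw, smul_sub]
          module
        have hb_term : ⟪w t, A⟫ ≤ (L : ℝ) * ‖w t‖ ^ 2 := by
          rw [hA]
          calc ⟪w t, b (x t + f1 t) - b (x t + f2 t)⟫
              ≤ ‖w t‖ * ‖b (x t + f1 t) - b (x t + f2 t)‖ := real_inner_le_norm _ _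
            _ ≤ ‖w t‖ * ((L : ℝ) * ‖w t‖) := by
                apply mul_le_mul_of_nonneg_left _ (norm_nonneg _)
                have := hb.dist_le_mul (x t + f1 t) (x t + f2 t)
                simpa [dist_eq_norm, hw, add_sub_add_left_eq_sub] using this
            _ = (L : ℝ) * ‖w t‖ ^ 2 := by ring
        have hg_term : 0 ≤ ⟪w t, B⟫ := by
          rw [hB]
          have := gMap_monotone (f1 t) (f2 t)
          rwa [real_inner_comm] at this
        have he_term : ⟪w t, C⟫ ≥ -((e1 + e2) * ‖w t‖) := by
          rw [hC]
          have h1 := real_inner_le_norm (w t)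
            ((G1 (f1 t) - gMap d (f1 t)) - (G2 (f2 t) - gMap d (f2 t)))
          have h2 := real_inner_le_norm (w t)
            ((G2 (f2 t) - gMap d (f2 t)) - (G1 (f1 t) - gMap d (f1 t)))
          have hnorm : ‖(G1 (f1 t) - gMap d (f1 t)) - (G2 (f2 t) - gMap d (f2 t))‖
              ≤ e1 + e2 := by
            calc ‖(G1 (f1 t) - gMap d (f1 t)) - (G2 (f2 t) - gMap d (f2 t))‖
                ≤ ‖G1 (f1 t) - gMap d (f1 t)‖ + ‖G2 (f2 t) - gMap d (f2 t)‖ := norm_sub_le _ _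
              _ ≤ e1 + e2 := add_le_add (hG1 _) (hG2 _)
          have h3 : ⟪w t, (G2 (f2 t) - gMap d (f2 t)) - (G1 (f1 t) - gMap d (f1 t))⟫
              = -⟪w t, (G1 (f1 t) - gMap d (f1 t)) - (G2 (f2 t) - gMap d (f2 t))⟫ := by
            rw [← inner_neg_right]; congr 1; abel
          have h4 : ‖(G2 (f2 t) - gMap d (f2 t)) - (G1 (f1 t) - gMap d (f1 t))‖
              = ‖(G1 (f1 t) - gMap d (f1 t)) - (G2 (f2 t) - gMap d (f2 t))‖ :=
            norm_sub_rev _ _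
          nlinarith [norm_nonneg (w t), h2, h3, h4,
            mul_le_mul_of_nonneg_left hnorm (norm_nonneg (w t))]
        have hlam_term : 0 ≤ ⟪w t, lam • w t⟫ := by
          rw [real_inner_smul_right]
          exact mul_nonneg hlam (real_inner_self_nonneg)
        rw [hv_split]
        have hsplit2 : ⟪w t, A - ϖ • B - ϖ • C - lam • w t⟫
            = ⟪w t, A⟫ - ϖ * ⟪w t, B⟫ - ϖ * ⟪w t, C⟫ - ⟪w t, lam • w t⟫ := by
          simp only [inner_sub_right, real_inner_smul_right]
        rw [hsplit2]
        have he1 : 0 ≤ e1 := (norm_nonneg _).trans (hG1 0)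
        have he2 : 0 ≤ e2 := (norm_nonneg _).trans (hG2 0)
        nlinarith [mul_le_mul_of_nonneg_left (neg_le_neg he_term) hϖ,
          mul_nonneg hϖ hg_term]
      have hφ_eq : φ t = ‖w t‖ ^ 2 := real_inner_self_eq_norm_sq _
      have hD_eq : D t = 2 * ⟪w t, v t⟫ := by
        simp only [hD]
        rw [real_inner_comm (w t) (v t)]; ring
      rw [hD_eq, hφ_eq]
      nlinarith [norm_nonneg (w t), sq_nonneg (‖w t‖ - ϖ * (e1 + e2)),
        NNReal.coe_nonneg L]
  intro t ht
  have := key t ht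
  rw [sub_zero] at this
  calc ‖f1 t - f2 t‖ ^ 2 = φ t := (real_inner_self_eq_norm_sq _).symm
    _ ≤ _ := this
/-- Global existence of solutions on `[0,∞)` for a globally Lipschitz time-dependent
vector field. -/
lemma global_solution {β : Type*} [NormedAddCommGroup β] [NormedSpace ℝ β] [CompleteSpace β]
    (v : ℝ → β → β) (K : NNReal) (hK : ∀ t, LipschitzWith K (v t))
    (hcont : ∀ ρ, Continuous fun t => v t ρ) (x₀ : β) :
    ∃ f : ℝ → β, f 0 = x₀ ∧ ∀ t ∈ Ici (0:ℝ), HasDerivWithinAt f (v t (f t)) (Ici 0) t := by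
  set τ : ℝ := ((1:ℝ) + K)⁻¹ with hτdef
  have hτ : 0 < τ := by positivity
  -- one Picard-Lindelöf step of uniform length τ
  have step : ∀ t₀ : ℝ, ∀ y : β, ∃ f : ℝ → β, f t₀ = y ∧
      ∀ t ∈ Icc t₀ (t₀ + τ), HasDerivWithinAt f (v t (f t)) (Icc t₀ (t₀ + τ)) t := by
    intro t₀ y
    obtain ⟨C₀, hC₀⟩ := (isCompact_Icc (a := t₀) (b := t₀ + τ)).exists_bound_of_continuousOn
      ((hcont y).continuousOn)
    set R : ℝ := max C₀ 1 with hRdef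
    have hR1 : (1:ℝ) ≤ R := le_max_right _ _
    have hR0 : (0:ℝ) ≤ R * (1 + K) := mul_nonneg (by linarith) (by positivity)
    have hpl : IsPicardLindelof v (tmin := t₀) (tmax := t₀ + τ) ⟨t₀, le_refl _, by linarith⟩ y
        (Real.toNNReal R) 0 (Real.toNNReal (R * (1 + K))) K :=
      { lipschitzOnWith := fun t _ => (hK t).lipschitzOnWith
        continuousOn := fun x _ => (hcont x).continuousOn
        norm_le := by
          intro t ht z hz
          rw [Real.coe_toNNReal _ hR0]
          rw [Real.coe_toNNReal _ (by linarith)] at hz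
          have h1 : ‖v t z‖ ≤ ‖v t y‖ + ‖v t z - v t y‖ := by
            calc ‖v t z‖ = ‖v t y + (v t z - v t y)‖ := by congr 1; abel
              _ ≤ ‖v t y‖ + ‖v t z - v t y‖ := norm_add_le _ _
          have h2 : ‖v t z - v t y‖ ≤ (K : ℝ) * R := by
            have := (hK t).dist_le_mul z y
            rw [dist_eq_norm] at this
            calc ‖v t z - v t y‖ ≤ (K : ℝ) * dist z y := this
              _ ≤ (K : ℝ) * R := by
                  apply mul_le_mul_of_nonneg_left (Metric.mem_closedBall.mp hz) K.coe_nonneg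
          have h3 : ‖v t y‖ ≤ R := (hC₀ t ht).trans (le_max_left _ _)
          calc ‖v t z‖ ≤ R + (K:ℝ) * R := by linarith
            _ = R * (1 + K) := by ring
        mul_max_le := by
          have hmax : max (t₀ + τ - t₀) (t₀ - t₀) = τ := by
            rw [add_sub_cancel_left, sub_self, max_eq_left hτ.le]
          simp only [Real.coe_toNNReal _ hR0, Real.coe_toNNReal _ (show (0:ℝ) ≤ R by linarith),
            NNReal.coe_zero, sub_zero]
          rw [hmax, hτdef, mul_inv_le_iff₀ (by positivity)] }
    exact hpl.exists_eq_forall_mem_Icc_hasDerivWithinAt₀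
  choose Fs hFs0 hFsd using step
  set A : ℕ → ℝ := fun n => n * τ with hAdef
  have hA : ∀ n : ℕ, A (n + 1) = A n + τ := by
    intro n; simp only [hAdef]; push_cast; ring
  have hA0 : A 0 = 0 := by simp [hAdef]
  have hAmono : ∀ n : ℕ, A n < A (n + 1) := fun n => by rw [hA]; linarith
  set S : ℕ → ℝ → β := fun n => Nat.rec (Fs (A 0) x₀)
    (fun n f => Fs (A (n + 1)) (f (A (n + 1)))) n with hSdef
  have hSd : ∀ n : ℕ, ∀ t ∈ Icc (A n) (A (n + 1)),
      HasDerivWithinAt (S n) (v t (S n t)) (Icc (A n) (A (n + 1))) t := by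
    intro n
    rw [hA n]
    cases n with
    | zero => exact hFsd (A 0) x₀
    | succ m => exact hFsd (A (m + 1)) _
  have hSinit : ∀ n : ℕ, S (n + 1) (A (n + 1)) = S n (A (n + 1)) :=
    fun n => hFs0 (A (n + 1)) _
  set f : ℝ → β := fun t => S ⌊t / τ⌋₊ t with hfdef
  -- floor facts
  have floor_eq : ∀ (n : ℕ) (t : ℝ), A n ≤ t → t < A (n + 1) → ⌊t / τ⌋₊ = n := by
    intro n t h1 h2
    have hAn : A n = (n:ℝ) * τ := rfl
    have hAn1 : A (n+1) = ((n:ℝ)+1) * τ := by rw [hAdef]; push_cast; ring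
    rw [hAn] at h1; rw [hAn1] at h2
    have ht0 : 0 ≤ t := le_trans (by positivity) h1
    rw [Nat.floor_eq_iff (by positivity)]
    refine ⟨?_, ?_⟩
    · rw [le_div_iff₀ hτ]; exact h1
    · rw [div_lt_iff₀ hτ]; exact h2
  have c1 : ∀ (n : ℕ), ∀ t ∈ Icc (A n) (A (n + 1)), f t = S n t := by
    intro n t ht
    rcases lt_or_eq_of_le ht.2 with h | h
    · simp only [hfdef]; rw [floor_eq n t ht.1 h]
    · have hfl : ⌊t / τ⌋₊ = n + 1 := by
        rw [h, hAdef]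
        rw [mul_div_cancel_right₀ _ hτ.ne']
        exact Nat.floor_natCast _
      simp only [hfdef]
      rw [hfl, h]
      exact hSinit n
  have hf0 : f 0 = x₀ := by
    have hfl : ⌊(0:ℝ) / τ⌋₊ = 0 := by simp
    have h1 : f 0 = S 0 0 := by simp only [hfdef, hfl]
    rw [h1]
    show Fs (A 0) x₀ 0 = x₀
    rw [show (0:ℝ) = A 0 from hA0.symm]
    exact hFs0 _ _
  refine ⟨f, hf0, ?_⟩
  intro t ht
  have ht0 : (0:ℝ) ≤ t := ht
  obtain ⟨n, hn⟩ : ∃ n : ℕ, n = ⌊t / τ⌋₊ := ⟨_, rfl⟩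
  have hn1 : A n ≤ t := by
    have hAn : A n = (n:ℝ) * τ := rfl
    rw [hAn, ← le_div_iff₀ hτ, hn]
    exact Nat.floor_le (div_nonneg ht0 hτ.le)
  have hn2 : t < A (n + 1) := by
    have hAn1 : A (n+1) = ((n:ℝ)+1) * τ := by rw [hAdef]; push_cast; ring
    rw [hAn1, ← div_lt_iff₀ hτ, hn]
    exact Nat.lt_floor_add_one _
  have hmem : t ∈ Icc (A n) (A (n + 1)) := ⟨hn1, hn2.le⟩
  clear hn
  have hder_n : HasDerivWithinAt f (v t (f t)) (Icc (A n) (A (n + 1))) t := by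
    have h := (hSd n t hmem).congr (fun z hz => c1 n z hz) (c1 n t hmem)
    rwa [← c1 n t hmem] at h
  rcases lt_or_eq_of_le hn1 with hlt | heq
  · exact ((hder_n.hasDerivAt (Icc_mem_nhds hlt hn2)).hasDerivWithinAt)
  · -- t = A n
    cases n with
    | zero =>
      have ht0' : t = 0 := by rw [← heq, hA0]
      apply hder_n.mono_of_mem_nhdsWithin
      rw [← heq, hA0, ← Ici_inter_Iic]
      refine Filter.inter_mem self_mem_nhdsWithin
        (mem_nhdsWithin_of_mem_nhds (Iic_mem_nhds ?_))
      rw [← hA0]; exact hAmono 0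
    | succ m =>
      have hmem' : t ∈ Icc (A m) (A (m + 1)) :=
        ⟨by rw [← heq]; exact (hAmono m).le, heq.ge⟩
      have hder_m : HasDerivWithinAt f (v t (f t)) (Icc (A m) (A (m + 1))) t := by
        have h := (hSd m t hmem').congr (fun z hz => c1 m z hz) (c1 m t hmem')
        rwa [← c1 m t hmem'] at h
      have hunion := hder_m.union hder_n
      rw [Icc_union_Icc_eq_Icc (hAmono m).le (hAmono (m + 1)).le] at hunion
      apply hunion.mono_of_mem_nhdsWithin
      apply mem_nhdsWithin_of_mem_nhds
      apply Icc_mem_nhds (by rw [← heq]; exact hAmono m) (by rw [← heq]; exact hAmono (m + 1))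

end Stmt7

open Filter MeasureTheory intervalIntegral Topology in
/-- Existence-and-uniqueness part of Lemma 6.2: for `b` Lipschitz, the ODE
`ρ' = b(x+ρ) - b(x) - ϖ g(ρ) - λ ρ` with initial condition `ρ₀` has exactly one
solution on `[0,∞)`. -/
theorem stmt_7 (d : ℕ) (b : EuclideanSpace ℝ (Fin d) → EuclideanSpace ℝ (Fin d))
    (hb : ∃ L : NNReal, LipschitzWith L b) (lam : ℝ) (hlam : 0 ≤ lam)
    (x : ℝ → EuclideanSpace ℝ (Fin d)) (hx : ContinuousOn x (Ici 0))
    (ϖ : ℝ) (hϖ : 0 < ϖ) (ρ₀ : EuclideanSpace ℝ (Fin d)) :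
    ∃ ρ : ℝ → EuclideanSpace ℝ (Fin d),
      (ρ 0 = ρ₀ ∧ ∀ t ∈ Ici (0:ℝ),
        HasDerivWithinAt ρ
          (b (x t + ρ t) - b (x t) - ϖ • gMap d (ρ t) - lam • ρ t) (Ici 0) t) ∧
      ∀ σ : ℝ → EuclideanSpace ℝ (Fin d),
        (σ 0 = ρ₀ ∧ ∀ t ∈ Ici (0:ℝ),
          HasDerivWithinAt σ
            (b (x t + σ t) - b (x t) - ϖ • gMap d (σ t) - lam • σ t) (Ici 0) t) →
        ∀ t ∈ Ici (0:ℝ), σ t = ρ t := by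
  classical
  obtain ⟨L, hb⟩ := hb
  -- extend the driver continuously to all of ℝ
  set X : ℝ → EuclideanSpace ℝ (Fin d) := fun t => x (max t 0) with hXdef
  have hX : Continuous X :=
    hx.comp_continuous (continuous_id.max continuous_const) fun t => le_max_right t 0
  have hXeq : ∀ t : ℝ, 0 ≤ t → X t = x t := by
    intro t ht; simp only [hXdef, max_eq_left ht]
  set ε : ℕ → ℝ := fun n => ((n : ℝ) + 1)⁻¹ with hεdef
  have hεpos : ∀ n : ℕ, 0 < ε n := fun n => by positivity
  have hεle1 : ∀ n : ℕ, ε n ≤ 1 := by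
    intro n
    rw [hεdef]
    exact inv_le_one_of_one_le₀ (by push_cast; linarith [Nat.cast_nonneg (α := ℝ) n])
  have hεanti : ∀ n m : ℕ, n ≤ m → ε m ≤ ε n := by
    intro n m h
    apply inv_anti₀ (by positivity)
    have : (n:ℝ) ≤ m := Nat.cast_le.mpr h
    linarith
  have hsqto0 : Tendsto (fun n : ℕ => Real.sqrt (ε n)) atTop (𝓝 0) := by
    have h1 : Tendsto ε atTop (𝓝 0) := by
      simp only [hεdef]
      exact tendsto_one_div_add_atTop_nhds_zero_nat.congr (fun n => one_div _)
    have h2 := (Real.continuous_sqrt.tendsto 0).comp h1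
    simpa [Real.sqrt_zero, Function.comp_def] using h2
  set G : ℕ → EuclideanSpace ℝ (Fin d) → EuclideanSpace ℝ (Fin d) :=
    fun n => Stmt7.gA d (ε n) with hGdef
  have hGa : ∀ (n : ℕ) ρ, ‖G n ρ - gMap d ρ‖ ≤ 2 * Real.sqrt (ε n) :=
    fun n ρ => Stmt7.gA_approx (hεpos n).le ρ
  -- global solutions of the regularized equations
  have hex : ∀ n : ℕ, ∃ f : ℝ → EuclideanSpace ℝ (Fin d), f 0 = ρ₀ ∧ ∀ t ∈ Ici (0:ℝ),
      HasDerivWithinAt f (b (X t + f t) - b (X t) - ϖ • G n (f t) - lam • f t) (Ici 0) t := by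
    intro n
    have hsε : 0 < Real.sqrt (ε n) := Real.sqrt_pos.mpr (hεpos n)
    set Kc : ℝ := (L:ℝ) + ϖ * (2 / Real.sqrt (ε n)) + lam with hKc
    have hKc0 : 0 ≤ Kc :=
      add_nonneg (add_nonneg L.coe_nonneg (mul_nonneg hϖ.le (by positivity))) hlam
    have hlip : ∀ t, LipschitzWith (Real.toNNReal Kc)
        (fun ρ => b (X t + ρ) - b (X t) - ϖ • G n ρ - lam • ρ) := by
      intro t
      apply LipschitzWith.of_dist_le_mul
      intro p q
      rw [Real.coe_toNNReal _ hKc0, dist_eq_norm, dist_eq_norm]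
      have hsplit : (b (X t + p) - b (X t) - ϖ • G n p - lam • p)
          - (b (X t + q) - b (X t) - ϖ • G n q - lam • q)
          = (b (X t + p) - b (X t + q)) - ϖ • (G n p - G n q) - lam • (p - q) := by
        simp only [smul_sub]; abel
      rw [hsplit]
      have h1 : ‖b (X t + p) - b (X t + q)‖ ≤ (L:ℝ) * ‖p - q‖ := by
        have := hb.dist_le_mul (X t + p) (X t + q)
        simpa [dist_eq_norm, add_sub_add_left_eq_sub] using this
      have h2 : ‖G n p - G n q‖ ≤ (2 / Real.sqrt (ε n)) * ‖p - q‖ := by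
        have h := (Stmt7.gA_lipschitz (hεpos n)).dist_le_mul p q
        rwa [dist_eq_norm, dist_eq_norm, Real.coe_toNNReal _ (by positivity)] at h
      have htri : ‖(b (X t + p) - b (X t + q)) - ϖ • (G n p - G n q) - lam • (p - q)‖
          ≤ ‖b (X t + p) - b (X t + q)‖ + ‖ϖ • (G n p - G n q)‖ + ‖lam • (p - q)‖ := by
        calc ‖(b (X t + p) - b (X t + q)) - ϖ • (G n p - G n q) - lam • (p - q)‖
            ≤ ‖(b (X t + p) - b (X t + q)) - ϖ • (G n p - G n q)‖ + ‖lam • (p - q)‖ :=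
              norm_sub_le _ _
          _ ≤ _ := by
              have := norm_sub_le (b (X t + p) - b (X t + q)) (ϖ • (G n p - G n q))
              linarith
      have hs1 : ‖ϖ • (G n p - G n q)‖ = ϖ * ‖G n p - G n q‖ := by
        rw [norm_smul, Real.norm_of_nonneg hϖ.le]
      have hs2 : ‖lam • (p - q)‖ = lam * ‖p - q‖ := by
        rw [norm_smul, Real.norm_of_nonneg hlam]
      rw [hs1, hs2] at htri
      have h3 := mul_le_mul_of_nonneg_left h2 hϖ.le
      rw [hKc]
      nlinarith [norm_nonneg (p - q)]
    have hcontt : ∀ ρ, Continuous fun t => b (X t + ρ) - b (X t) - ϖ • G n ρ - lam • ρ :=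
      fun ρ => (((hb.continuous.comp (hX.add continuous_const)).sub
        (hb.continuous.comp hX)).sub continuous_const).sub continuous_const
    exact Stmt7.global_solution
      (fun t ρ => b (X t + ρ) - b (X t) - ϖ • G n ρ - lam • ρ)
      (Real.toNNReal Kc) hlip hcontt ρ₀
  choose F hF0 hFd using hex
  have hFc : ∀ n, ContinuousOn (F n) (Ici (0:ℝ)) :=
    fun n t ht => (hFd n t ht).continuousWithinAt
  set KK : ℝ := 2 * (L:ℝ) + 1 with hKKdef
  have hKK : 0 < KK := by positivity
  set BB : ℝ → ℝ := fun T => Real.sqrt (Real.exp (KK * T) / KK) with hBBdef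
  have hBB0 : ∀ T, 0 ≤ BB T := fun T => Real.sqrt_nonneg _
  -- pairwise distance estimate from the key Grönwall comparison
  have hdist : ∀ (n m : ℕ) (T t : ℝ), 0 ≤ t → t ≤ T →
      dist (F n t) (F m t) ≤ ϖ * (2 * Real.sqrt (ε n) + 2 * Real.sqrt (ε m)) * BB T := by
    intro n m T t ht hT
    have hsq := Stmt7.key_estimate hb hlam hϖ.le (hGa n) (hGa m)
      ((hFc n).mono Icc_subset_Ici_self) ((hFc m).mono Icc_subset_Ici_self)
      (fun s hs => (hFd n s hs.1).mono (Ici_subset_Ici.mpr hs.1))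
      (fun s hs => (hFd m s hs.1).mono (Ici_subset_Ici.mpr hs.1))
      (by rw [hF0 n, hF0 m]) t ⟨ht, hT⟩
    set c : ℝ := ϖ * (2 * Real.sqrt (ε n) + 2 * Real.sqrt (ε m)) with hc
    have hc0 : 0 ≤ c := by positivity
    have hgb : gronwallBound 0 KK (c^2) t ≤ c^2 * (Real.exp (KK*T)/KK) := by
      rw [gronwallBound_of_K_ne_0 hKK.ne']
      have h1 : Real.exp (KK*t) - 1 ≤ Real.exp (KK*T) := by
        have := Real.exp_le_exp.mpr (mul_le_mul_of_nonneg_left hT hKK.le)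
        linarith
      calc 0 * Real.exp (KK*t) + c^2/KK * (Real.exp (KK*t) - 1)
          = c^2/KK * (Real.exp (KK*t) - 1) := by ring
        _ ≤ c^2/KK * Real.exp (KK*T) := mul_le_mul_of_nonneg_left h1 (by positivity)
        _ = c^2 * (Real.exp (KK*T)/KK) := by ring
    have hBBsq : (BB T)^2 = Real.exp (KK*T)/KK := Real.sq_sqrt (by positivity)
    have hfin : ‖F n t - F m t‖^2 ≤ (c * BB T)^2 := by
      calc ‖F n t - F m t‖^2 ≤ gronwallBound 0 (2*(L:ℝ)+1) (c^2) t := hsq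
        _ = gronwallBound 0 KK (c^2) t := by rw [hKKdef]
        _ ≤ c^2 * (Real.exp (KK*T)/KK) := hgb
        _ = (c * BB T)^2 := by
              have h2 : (c * BB T)^2 = c^2 * (Real.exp (KK*T)/KK) := by
                rw [mul_pow, hBBsq]
              rw [h2]
    rw [dist_eq_norm]
    calc ‖F n t - F m t‖ = Real.sqrt (‖F n t - F m t‖^2) :=
          (Real.sqrt_sq (norm_nonneg _)).symm
      _ ≤ Real.sqrt ((c * BB T)^2) := Real.sqrt_le_sqrt hfin
      _ = c * BB T := Real.sqrt_sq (by positivity)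
  -- the limit function
  have hbnd0 : ∀ T : ℝ, Tendsto (fun N : ℕ => ϖ * (4 * Real.sqrt (ε N)) * BB T) atTop (𝓝 0) := by
    intro T
    have h := ((hsqto0.const_mul 4).const_mul ϖ).mul_const (BB T)
    simpa using h
  have hcauchy : ∀ t : ℝ, ∃ y, Tendsto (fun n => F n (max t 0)) atTop (𝓝 y) := by
    intro t
    apply cauchySeq_tendsto_of_complete
    apply cauchySeq_of_le_tendsto_0 (fun N => ϖ * (4 * Real.sqrt (ε N)) * BB (max t 0))
      _ (hbnd0 (max t 0))
    intro n m N hn hm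
    have h := hdist n m (max t 0) (max t 0) (le_max_right _ _) le_rfl
    refine h.trans ?_
    have h1 : Real.sqrt (ε n) ≤ Real.sqrt (ε N) := Real.sqrt_le_sqrt (hεanti N n hn)
    have h2 : Real.sqrt (ε m) ≤ Real.sqrt (ε N) := Real.sqrt_le_sqrt (hεanti N m hm)
    exact mul_le_mul_of_nonneg_right
      (mul_le_mul_of_nonneg_left (by linarith) hϖ.le) (hBB0 _)
  choose ρlim hρlim using hcauchy
  have hρeq : ∀ t : ℝ, 0 ≤ t → Tendsto (fun n => F n t) atTop (𝓝 (ρlim t)) := by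
    intro t ht
    have := hρlim t
    rwa [max_eq_left ht] at this
  have hρmax : ∀ s : ℝ, ρlim s = ρlim (max s 0) := by
    intro s
    refine tendsto_nhds_unique (hρlim s) ?_
    have h := hρlim (max s 0)
    rwa [show max (max s 0) 0 = max s 0 by rw [max_assoc, max_self]] at h
  -- distance of approximants to the limit
  have hdlim : ∀ (N : ℕ) (T t : ℝ), 0 ≤ t → t ≤ T →
      dist (ρlim t) (F N t) ≤ ϖ * (4 * Real.sqrt (ε N)) * BB T := by
    intro N T t ht hT
    have htnd : Tendsto (fun m => dist (F m t) (F N t)) atTop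
        (𝓝 (dist (ρlim t) (F N t))) := (hρeq t ht).dist tendsto_const_nhds
    apply le_of_tendsto htnd
    filter_upwards [eventually_ge_atTop N] with m hm
    refine (hdist m N T t ht hT).trans ?_
    have h1 : Real.sqrt (ε m) ≤ Real.sqrt (ε N) := Real.sqrt_le_sqrt (hεanti N m hm)
    exact mul_le_mul_of_nonneg_right
      (mul_le_mul_of_nonneg_left (by linarith) hϖ.le) (hBB0 T)
  -- continuity of the limit
  have hFmaxc : ∀ n : ℕ, Continuous fun t => F n (max t 0) := fun n =>
    (hFc n).comp_continuous (continuous_id.max continuous_const) fun t => le_max_right t 0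
  have hρc : Continuous ρlim := by
    rw [continuous_iff_continuousAt]
    intro t₀
    set T : ℝ := |t₀| + 1 with hTdef
    have hT0 : 0 < T := by positivity
    have huc : TendstoUniformlyOn (fun n t => F n (max t 0)) ρlim atTop (Icc (-T) T) := by
      rw [Metric.tendstoUniformlyOn_iff]
      intro δ hδ
      filter_upwards [(hbnd0 T).eventually_lt_const hδ] with n hn
      intro s hs
      have hmax : max s 0 ≤ T := max_le hs.2 hT0.le
      have h := hdlim n T (max s 0) (le_max_right _ _) hmax
      rw [hρmax s]
      exact h.trans_lt hn
    have hco := huc.continuousOn (Filter.Eventually.of_forall fun n => (hFmaxc n).continuousOn).frequently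
    apply hco.continuousAt (Icc_mem_nhds ?_ ?_)
    · have := neg_abs_le t₀; linarith
    · have := le_abs_self t₀; linarith
  -- uniform norm bound on [0,T]
  have hMex : ∀ T : ℝ, 0 ≤ T → ∃ M : ℝ, 0 ≤ M ∧
      ∀ (n : ℕ), ∀ s ∈ Icc (0:ℝ) T, ‖F n s‖ ≤ M := by
    intro T hT
    obtain ⟨C, hC⟩ := (isCompact_Icc (a := (0:ℝ)) (b := T)).exists_bound_of_continuousOn
      ((hFc 0).mono Icc_subset_Ici_self)
    have hC0 : 0 ≤ C := (norm_nonneg _).trans (hC 0 ⟨le_rfl, hT⟩)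
    refine ⟨C + ϖ * (4 * Real.sqrt (ε 0)) * BB T, by positivity, ?_⟩
    intro n s hs
    have h := hdist n 0 T s hs.1 hs.2
    have h1 : Real.sqrt (ε n) ≤ Real.sqrt (ε 0) := Real.sqrt_le_sqrt (hεanti 0 n (Nat.zero_le n))
    have h2 : dist (F n s) (F 0 s) ≤ ϖ * (4 * Real.sqrt (ε 0)) * BB T :=
      h.trans (mul_le_mul_of_nonneg_right
        (mul_le_mul_of_nonneg_left (by linarith) hϖ.le) (hBB0 T))
    have h3 : ‖F n s‖ ≤ ‖F 0 s‖ + ‖F n s - F 0 s‖ := by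
      calc ‖F n s‖ = ‖F 0 s + (F n s - F 0 s)‖ := by congr 1; abel
        _ ≤ ‖F 0 s‖ + ‖F n s - F 0 s‖ := norm_add_le _ _
    rw [dist_eq_norm] at h2
    have h4 := hC s hs
    linarith
  -- integral identity for the approximants
  have hFint : ∀ (n : ℕ) (t : ℝ), 0 ≤ t → F n t = ρ₀ +
      ∫ s in (0:ℝ)..t, (b (X s + F n s) - b (X s) - ϖ • G n (F n s) - lam • F n s) := by
    intro n t ht
    have hFnc : ContinuousOn (F n) (Icc 0 t) := (hFc n).mono Icc_subset_Ici_self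
    have hVnc : ContinuousOn
        (fun s => b (X s + F n s) - b (X s) - ϖ • G n (F n s) - lam • F n s) (Icc 0 t) :=
      (((hb.continuous.comp_continuousOn (hX.continuousOn.add hFnc)).sub
        (hb.continuous.comp_continuousOn hX.continuousOn)).sub
        (((Stmt7.gA_lipschitz (hεpos n)).continuous.comp_continuousOn hFnc).const_smul ϖ)).sub
        (hFnc.const_smul lam)
    have hint : IntervalIntegrable
        (fun s => b (X s + F n s) - b (X s) - ϖ • G n (F n s) - lam • F n s)
        MeasureTheory.volume 0 t :=
      ContinuousOn.intervalIntegrable (by rw [uIcc_of_le ht]; exact hVnc)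
    have heq := intervalIntegral.integral_eq_sub_of_hasDeriv_right_of_le ht hFnc
      (fun s hs => ((hFd n s hs.1.le).hasDerivAt (Ici_mem_nhds hs.1)).hasDerivWithinAt) hint
    rw [heq, hF0 n]
    abel
  -- the limit vector field
  set V : ℝ → EuclideanSpace ℝ (Fin d) :=
    fun s => b (X s + ρlim s) - b (X s) - ϖ • gMap d (ρlim s) - lam • ρlim s with hVdef
  have hVc : Continuous V :=
    (((hb.continuous.comp (hX.add hρc)).sub (hb.continuous.comp hX)).sub
      ((Stmt7.continuous_gMap.comp hρc).const_smul ϖ)).sub (hρc.const_smul lam)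
  -- integral identity for the limit
  have hρint : ∀ t : ℝ, 0 ≤ t → ρlim t = ρ₀ + ∫ s in (0:ℝ)..t, V s := by
    intro t ht
    obtain ⟨M, hM0, hMb⟩ := hMex t ht
    have hmeas : MeasurableSet (Ioc (0:ℝ) t) := measurableSet_Ioc
    set Vn : ℕ → ℝ → EuclideanSpace ℝ (Fin d) :=
      fun n s => b (X s + F n s) - b (X s) - ϖ • G n (F n s) - lam • F n s with hVndef
    have hVnc : ∀ n, ContinuousOn (Vn n) (Icc 0 t) := by
      intro n
      have hFnc : ContinuousOn (F n) (Icc 0 t) := (hFc n).mono Icc_subset_Ici_self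
      exact (((hb.continuous.comp_continuousOn (hX.continuousOn.add hFnc)).sub
        (hb.continuous.comp_continuousOn hX.continuousOn)).sub
        (((Stmt7.gA_lipschitz (hεpos n)).continuous.comp_continuousOn hFnc).const_smul ϖ)).sub
        (hFnc.const_smul lam)
    -- a uniform bound for the integrands
    obtain ⟨CX, hCX⟩ := (isCompact_Icc (a := (0:ℝ)) (b := t)).exists_bound_of_continuousOn
      hX.continuousOn
    set CB : ℝ := (L:ℝ) * M + ϖ * Real.sqrt (max M 1) + lam * M with hCBdef
    have hVb : ∀ (n : ℕ), ∀ s ∈ Ioc (0:ℝ) t, ‖Vn n s‖ ≤ CB := by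
      intro n s hs
      have hs' : s ∈ Icc (0:ℝ) t := Ioc_subset_Icc_self hs
      have hFb := hMb n s hs'
      have h1 : ‖b (X s + F n s) - b (X s)‖ ≤ (L:ℝ) * M := by
        have := hb.dist_le_mul (X s + F n s) (X s)
        rw [dist_eq_norm, dist_eq_norm, add_sub_cancel_left] at this
        exact this.trans (mul_le_mul_of_nonneg_left hFb L.coe_nonneg)
      have h2 : ‖G n (F n s)‖ ≤ Real.sqrt (max M 1) :=
        Stmt7.gA_norm_le (hεpos n) (hεle1 n) hFb
      have h3 : ‖Vn n s‖ ≤ ‖b (X s + F n s) - b (X s)‖ + ϖ * ‖G n (F n s)‖ + lam * ‖F n s‖ := by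
        calc ‖Vn n s‖ ≤ ‖b (X s + F n s) - b (X s) - ϖ • G n (F n s)‖ + ‖lam • F n s‖ :=
              norm_sub_le _ _
          _ ≤ _ := by
              have h4 := norm_sub_le (b (X s + F n s) - b (X s)) (ϖ • G n (F n s))
              rw [norm_smul, Real.norm_of_nonneg hϖ.le] at h4
              rw [norm_smul, Real.norm_of_nonneg hlam]
              linarith
      have h5 : ϖ * ‖G n (F n s)‖ ≤ ϖ * Real.sqrt (max M 1) :=
        mul_le_mul_of_nonneg_left h2 hϖ.le
      have h6 : lam * ‖F n s‖ ≤ lam * M := mul_le_mul_of_nonneg_left hFb hlam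
      rw [hCBdef]
      linarith
    -- pointwise convergence of integrands
    have hVlim : ∀ s ∈ Ioc (0:ℝ) t, Tendsto (fun n => Vn n s) atTop (𝓝 (V s)) := by
      intro s hs
      have hFs : Tendsto (fun n => F n s) atTop (𝓝 (ρlim s)) := hρeq s hs.1.le
      have hb1 : Tendsto (fun n => b (X s + F n s)) atTop (𝓝 (b (X s + ρlim s))) :=
        (hb.continuous.continuousAt.tendsto.comp (tendsto_const_nhds.add hFs))
      have hg1 : Tendsto (fun n => gMap d (F n s)) atTop (𝓝 (gMap d (ρlim s))) :=
        Stmt7.continuous_gMap.continuousAt.tendsto.comp hFs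
      have hg2 : Tendsto (fun n => G n (F n s) - gMap d (F n s)) atTop (𝓝 0) := by
        apply squeeze_zero_norm (fun n => hGa n (F n s))
        have := hsqto0.const_mul 2
        simpa using this
      have hg3 : Tendsto (fun n => G n (F n s)) atTop (𝓝 (gMap d (ρlim s))) := by
        have := hg2.add hg1
        simp only [sub_add_cancel] at this
        simpa using this
      have : Tendsto (fun n => b (X s + F n s) - b (X s) - ϖ • G n (F n s) - lam • F n s)
          atTop (𝓝 (b (X s + ρlim s) - b (X s) - ϖ • gMap d (ρlim s) - lam • ρlim s)) :=
        ((hb1.sub tendsto_const_nhds).sub (hg3.const_smul ϖ)).sub (hFs.const_smul lam)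
      exact this
    -- dominated convergence
    have hconv : Tendsto (fun n => ∫ s in Ioc (0:ℝ) t, Vn n s) atTop
        (𝓝 (∫ s in Ioc (0:ℝ) t, V s)) := by
      apply MeasureTheory.tendsto_integral_filter_of_dominated_convergence
        (fun _ => CB)
      · exact Filter.Eventually.of_forall fun n =>
          ((hVnc n).mono Ioc_subset_Icc_self).aestronglyMeasurable hmeas
      · exact Filter.Eventually.of_forall fun n =>
          MeasureTheory.ae_restrict_of_forall_mem hmeas (hVb n)
      · exact MeasureTheory.integrableOn_const measure_Ioc_lt_top.ne
      · exact MeasureTheory.ae_restrict_of_forall_mem hmeas hVlim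
    have hFtnd : Tendsto (fun n => F n t) atTop (𝓝 (ρ₀ + ∫ s in Ioc (0:ℝ) t, V s)) := by
      have heq : ∀ n : ℕ, F n t = ρ₀ + ∫ s in Ioc (0:ℝ) t, Vn n s := by
        intro n
        rw [hFint n t ht, intervalIntegral.integral_of_le ht]
      rw [funext heq]
      exact tendsto_const_nhds.add hconv
    have := tendsto_nhds_unique (hρeq t ht) hFtnd
    rw [this, intervalIntegral.integral_of_le ht]
  -- the limit solves the ODE
  have hw : ∀ s : ℝ, HasDerivAt (fun u => ρ₀ + ∫ r in (0:ℝ)..u, V r) (V s) s := by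
    intro s
    have h1 : HasDerivAt (fun u => ∫ r in (0:ℝ)..u, V r) (V s) s :=
      intervalIntegral.integral_hasDerivAt_right (hVc.intervalIntegrable _ _)
        ⟨univ, Filter.univ_mem, hVc.aestronglyMeasurable.restrict⟩ hVc.continuousAt
    simpa using h1.const_add ρ₀
  have hρ0 : ρlim 0 = ρ₀ := by
    have := hρint 0 le_rfl
    simpa using this
  have hode : ∀ t ∈ Ici (0:ℝ), HasDerivWithinAt ρlim
      (b (x t + ρlim t) - b (x t) - ϖ • gMap d (ρlim t) - lam • ρlim t) (Ici 0) t := by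
    intro t ht
    have hD : HasDerivWithinAt ρlim (V t) (Ici 0) t :=
      ((hw t).hasDerivWithinAt).congr (fun z hz => hρint z hz) (hρint t ht)
    have hVt : V t = b (x t + ρlim t) - b (x t) - ϖ • gMap d (ρlim t) - lam • ρlim t := by
      rw [hVdef]
      simp only [hXeq t ht]
    rwa [hVt] at hD
  refine ⟨ρlim, ⟨hρ0, hode⟩, ?_⟩
  -- uniqueness
  intro σ hσ t ht
  obtain ⟨hσ0, hσd⟩ := hσ
  have hσc : ContinuousOn σ (Ici (0:ℝ)) := fun s hs => (hσd s hs).continuousWithinAt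
  have hzero : ∀ ρ : EuclideanSpace ℝ (Fin d), ‖gMap d ρ - gMap d ρ‖ ≤ 0 := by simp
  have hsq := Stmt7.key_estimate hb hlam hϖ.le hzero hzero
    (hσc.mono Icc_subset_Ici_self) (hρc.continuousOn)
    (fun s hs => (hσd s hs.1).mono (Ici_subset_Ici.mpr hs.1))
    (fun s hs => (hode s hs.1).mono (Ici_subset_Ici.mpr hs.1))
    (by rw [hσ0, hρ0]) t ⟨ht, le_rfl⟩
  have h0 : (ϖ * ((0:ℝ) + 0))^2 = 0 := by ring
  rw [h0, gronwallBound_ε0_δ0] at hsq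
  have hn0 : ‖σ t - ρlim t‖ = 0 := by
    have := sq_nonneg ‖σ t - ρlim t‖
    nlinarith [norm_nonneg (σ t - ρlim t)]
  rw [norm_eq_zero, sub_eq_zero] at hn0
  exact hn0
end

section
/- Let H ∈ (0,1), ε ∈ (0, 2 − 2H), α ∈ (max(0, 1/2 − H), 1] and 𝔠 ≥ 0, and let w : (−∞, 0] → ℝ^d be continuous with w(0) = 0, |w(s)| ≤ 𝔠 (1 ∨ |s|)^{(1+ε)/2} for all s ≤ 0, and |w(s)| ≤ 𝔠 |s|^α for s ∈ [−1, 0]. Then for every t > 0 the integral F(t) = ∫_{−∞}^0 ((t − s)^{H−3/2} − (−s)^{H−3/2}) w(s) ds converges absolutely, and F is differentiable on (0, ∞) with F'(t) = (H − 3/2) ∫_{−∞}^0 (t − s)^{H−5/2} w(s) ds. -/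
open Set MeasureTheory

lemma neg_rpow_integrable_Iic {β : ℝ} (hβ : β < -1) :
    IntegrableOn (fun s : ℝ => (-s) ^ β) (Iic (-1 : ℝ)) := by
  have h1 : IntegrableOn (fun x : ℝ => x ^ β) (Ioi (1 : ℝ)) :=
    integrableOn_Ioi_rpow_of_lt hβ one_pos
  have h2 := (MeasurePreserving.integrableOn_comp_preimage
      (Measure.measurePreserving_neg (volume : Measure ℝ))
      (Homeomorph.neg ℝ).measurableEmbedding (f := fun x : ℝ => x ^ β)
      (s := Ioi (1 : ℝ))).2 h1
  have hpre : (Neg.neg ⁻¹' Ioi (1 : ℝ) : Set ℝ) = Iio (-1 : ℝ) := by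
    ext x; simp [lt_neg]
  rw [hpre] at h2
  have h3 : IntegrableOn (fun s : ℝ => (-s) ^ β) (Iio (-1 : ℝ)) := h2
  rwa [IntegrableOn, Measure.restrict_congr_set Iio_ae_eq_Iic] at h3

lemma neg_rpow_integrable_Icc {β : ℝ} (hβ : -1 < β) :
    IntegrableOn (fun s : ℝ => (-s) ^ β) (Icc (-1 : ℝ) 0) := by
  have h1 : IntervalIntegrable (fun x : ℝ => x ^ β) volume 0 1 :=
    intervalIntegral.intervalIntegrable_rpow' hβ
  have h1' : IntegrableOn (fun x : ℝ => x ^ β) (Ioc (0 : ℝ) 1) :=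
    (intervalIntegrable_iff_integrableOn_Ioc_of_le (by norm_num)).1 h1
  have h2 := (MeasurePreserving.integrableOn_comp_preimage
      (Measure.measurePreserving_neg (volume : Measure ℝ))
      (Homeomorph.neg ℝ).measurableEmbedding (f := fun x : ℝ => x ^ β)
      (s := Ioc (0 : ℝ) 1)).2 h1'
  have hpre : (Neg.neg ⁻¹' Ioc (0 : ℝ) 1 : Set ℝ) = Ico (-1 : ℝ) 0 := by
    ext x
    simp only [mem_preimage, mem_Ioc, mem_Ico]
    constructor <;> rintro ⟨ha, hb⟩ <;> constructor <;> linarith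
  rw [hpre] at h2
  have h3 : IntegrableOn (fun s : ℝ => (-s) ^ β) (Ico (-1 : ℝ) 0) := h2
  rwa [IntegrableOn, Measure.restrict_congr_set Ico_ae_eq_Icc] at h3

/-- Differentiation under the integral for the past-dependent drift: under
growth at `-∞` and a Hölder bound near `0`, the integral
`F(t) = ∫_{-∞}^0 ((t-s)^{H-3/2} - (-s)^{H-3/2}) w(s) ds` converges absolutely and
`F'(t) = (H-3/2) ∫_{-∞}^0 (t-s)^{H-5/2} w(s) ds` for `t > 0`. -/
theorem stmt_10 (d : ℕ) (H ε α c₀ : ℝ) (hH : H ∈ Ioo (0:ℝ) 1)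
    (hε : ε ∈ Ioo (0:ℝ) (2 - 2 * H)) (hα : α ∈ Ioc (max 0 (1/2 - H)) 1) (hc : 0 ≤ c₀)
    (w : ℝ → EuclideanSpace ℝ (Fin d)) (hw : ContinuousOn w (Iic 0)) (hw0 : w 0 = 0)
    (hgrowth : ∀ s : ℝ, s ≤ 0 → ‖w s‖ ≤ c₀ * (max 1 |s|) ^ ((1 + ε) / 2))
    (hhold : ∀ s ∈ Icc (-1:ℝ) 0, ‖w s‖ ≤ c₀ * |s| ^ α) :
    ∀ t : ℝ, 0 < t →
      IntegrableOn
        (fun s => ((t - s) ^ (H - 3/2) - (-s) ^ (H - 3/2)) • w s) (Iic 0) ∧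
      HasDerivAt
        (fun τ => ∫ s in Iic (0:ℝ), ((τ - s) ^ (H - 3/2) - (-s) ^ (H - 3/2)) • w s)
        ((H - 3/2) • ∫ s in Iic (0:ℝ), (t - s) ^ (H - 5/2) • w s) t := by
  obtain ⟨hH0, hH1⟩ := hH
  obtain ⟨hε0, hε1⟩ := hε
  obtain ⟨hα0, hα1⟩ := hα
  have hαpos : 0 < α := lt_of_le_of_lt (le_max_left _ _) hα0
  have hαH : 1/2 - H < α := lt_of_le_of_lt (le_max_right _ _) hα0
  intro t ht
  have hrw : volume.restrict (Iio (0:ℝ)) = volume.restrict (Iic 0) :=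
    Measure.restrict_congr_set Iio_ae_eq_Iic
  -- measurability of F τ for τ > 0
  have hwm : ∀ τ : ℝ, 0 < τ → AEStronglyMeasurable
      (fun s => ((τ - s) ^ (H - 3/2) - (-s) ^ (H - 3/2)) • w s)
      (volume.restrict (Iic (0:ℝ))) := by
    intro τ hτ
    rw [← hrw]
    refine ContinuousOn.aestronglyMeasurable ?_ measurableSet_Iio
    refine ContinuousOn.smul (ContinuousOn.sub ?_ ?_ :
      ContinuousOn (fun s : ℝ => (τ - s) ^ (H - 3/2) - (-s) ^ (H - 3/2)) (Iio 0)) (hw.mono Iio_subset_Iic_self)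
    · refine (continuousOn_const.sub continuousOn_id).rpow_const fun s hs => Or.inl ?_
      have hs0 : s < 0 := hs
      have : (0:ℝ) < τ - s := by linarith
      exact this.ne'
    · refine (continuousOn_id (s := Iio (0:ℝ))).neg.rpow_const fun s hs => Or.inl ?_
      have hs0 : s < 0 := hs
      have : (0:ℝ) < -s := by linarith
      exact this.ne'
  -- MVT estimate on (-∞, -1]
  have hmvt : ∀ s : ℝ, s ≤ -1 → |(t - s) ^ (H - 3/2) - (-s) ^ (H - 3/2)| ≤
      (|H - 3/2| * (-s) ^ (H - 5/2)) * t := by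
    intro s hs
    have hns : (0:ℝ) < -s := by linarith
    have hd : ∀ x ∈ Icc (0:ℝ) t, HasDerivWithinAt (fun y => (y - s) ^ (H - 3/2))
        ((H - 3/2) * (x - s) ^ (H - 3/2 - 1)) (Icc (0:ℝ) t) x := by
      intro x hx
      have hxs : (0:ℝ) < x - s := by have := hx.1; linarith
      have h1 : HasDerivAt (fun y : ℝ => y - s) 1 x := (hasDerivAt_id x).sub_const s
      have h2 := (Real.hasDerivAt_rpow_const (x := x - s) (p := H - 3/2)
        (Or.inl hxs.ne')).comp x h1
      simpa [Function.comp_def] using h2.hasDerivWithinAt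
    have hb : ∀ x ∈ Icc (0:ℝ) t, ‖(H - 3/2) * (x - s) ^ (H - 3/2 - 1)‖ ≤
        |H - 3/2| * (-s) ^ (H - 5/2) := by
      intro x hx
      have hxs : (0:ℝ) < x - s := by have := hx.1; linarith
      have he : H - 3/2 - 1 = H - 5/2 := by ring
      rw [Real.norm_eq_abs, abs_mul, abs_of_nonneg (Real.rpow_nonneg hxs.le _), he]
      have h3 : (x - s) ^ (H - 5/2) ≤ (-s) ^ (H - 5/2) :=
        Real.rpow_le_rpow_of_nonpos hns (by linarith [hx.1]) (by linarith)
      exact mul_le_mul_of_nonneg_left h3 (abs_nonneg _)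
    have hkey := Convex.norm_image_sub_le_of_norm_hasDerivWithin_le hd hb (convex_Icc 0 t)
      (left_mem_Icc.2 ht.le) (right_mem_Icc.2 ht.le)
    simpa [Real.norm_eq_abs, abs_of_pos ht, zero_sub] using hkey
  -- pointwise bound on (-∞, -1]
  have hbd1 : ∀ s : ℝ, s ≤ -1 → ‖((t - s) ^ (H - 3/2) - (-s) ^ (H - 3/2)) • w s‖ ≤
      (|H - 3/2| * t * c₀) * (-s) ^ (H - 5/2 + (1 + ε) / 2) := by
    intro s hs
    have hns : (0:ℝ) < -s := by linarith
    have hmax : max 1 |s| = -s := by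
      rw [abs_of_neg (by linarith : s < 0)]; exact max_eq_right (by linarith)
    have h2 : ‖w s‖ ≤ c₀ * (-s) ^ ((1 + ε) / 2) := by
      have := hgrowth s (by linarith); rwa [hmax] at this
    rw [norm_smul, Real.norm_eq_abs]
    calc |(t - s) ^ (H - 3/2) - (-s) ^ (H - 3/2)| * ‖w s‖
        ≤ ((|H - 3/2| * (-s) ^ (H - 5/2)) * t) * (c₀ * (-s) ^ ((1 + ε) / 2)) :=
          mul_le_mul (hmvt s hs) h2 (norm_nonneg _)
            (mul_nonneg (mul_nonneg (abs_nonneg _) (Real.rpow_nonneg hns.le _)) ht.le)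
      _ = (|H - 3/2| * t * c₀) * ((-s) ^ (H - 5/2) * (-s) ^ ((1 + ε) / 2)) := by ring
      _ = (|H - 3/2| * t * c₀) * (-s) ^ (H - 5/2 + (1 + ε) / 2) := by
          rw [← Real.rpow_add hns]
  have hInt1 : IntegrableOn
      (fun s => ((t - s) ^ (H - 3/2) - (-s) ^ (H - 3/2)) • w s) (Iic (-1:ℝ)) := by
    have hgi : IntegrableOn
        (fun s : ℝ => (|H - 3/2| * t * c₀) * (-s) ^ (H - 5/2 + (1 + ε) / 2)) (Iic (-1:ℝ)) :=
      (neg_rpow_integrable_Iic (by linarith)).const_mul _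
    refine hgi.mono' ((hwm t ht).mono_measure
      (Measure.restrict_mono (Iic_subset_Iic.2 (by norm_num)) le_rfl)) ?_
    exact (ae_restrict_mem measurableSet_Iic).mono fun s hs => hbd1 s hs
  -- pointwise bound on [-1, 0]
  have hbd2 : ∀ s ∈ Icc (-1:ℝ) 0, ‖((t - s) ^ (H - 3/2) - (-s) ^ (H - 3/2)) • w s‖ ≤
      c₀ * (t ^ (H - 3/2) * (-s) ^ α + (-s) ^ (H - 3/2 + α)) := by
    intro s hs
    rcases eq_or_lt_of_le hs.2 with h0 | h0
    · subst h0
      simp only [hw0, smul_zero, norm_zero]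
      have : (0:ℝ) ≤ (-(0:ℝ)) ^ α := Real.rpow_nonneg (by norm_num) _
      have h2 : (0:ℝ) ≤ (-(0:ℝ)) ^ (H - 3/2 + α) := Real.rpow_nonneg (by norm_num) _
      have h3 : (0:ℝ) ≤ t ^ (H - 3/2) := Real.rpow_nonneg ht.le _
      exact mul_nonneg hc (add_nonneg (mul_nonneg h3 this) h2)
    · have hns : (0:ℝ) < -s := by linarith
      have h1 : |(t - s) ^ (H - 3/2) - (-s) ^ (H - 3/2)| ≤
          t ^ (H - 3/2) + (-s) ^ (H - 3/2) := by
        have ha : (t - s) ^ (H - 3/2) ≤ t ^ (H - 3/2) :=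
          Real.rpow_le_rpow_of_nonpos ht (by linarith) (by linarith)
        have hb' : (0:ℝ) ≤ (t - s) ^ (H - 3/2) := Real.rpow_nonneg (by linarith) _
        have hc' : (0:ℝ) ≤ (-s) ^ (H - 3/2) := Real.rpow_nonneg hns.le _
        rw [abs_le]
        constructor <;> nlinarith
      have h2 : ‖w s‖ ≤ c₀ * (-s) ^ α := by
        have := hhold s hs; rwa [abs_of_neg h0] at this
      rw [norm_smul, Real.norm_eq_abs]
      calc |(t - s) ^ (H - 3/2) - (-s) ^ (H - 3/2)| * ‖w s‖
          ≤ (t ^ (H - 3/2) + (-s) ^ (H - 3/2)) * (c₀ * (-s) ^ α) :=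
            mul_le_mul h1 h2 (norm_nonneg _)
              (add_nonneg (Real.rpow_nonneg ht.le _) (Real.rpow_nonneg hns.le _))
        _ = c₀ * (t ^ (H - 3/2) * (-s) ^ α + (-s) ^ (H - 3/2) * (-s) ^ α) := by ring
        _ = c₀ * (t ^ (H - 3/2) * (-s) ^ α + (-s) ^ (H - 3/2 + α)) := by
            rw [← Real.rpow_add hns]
  have hInt2 : IntegrableOn
      (fun s => ((t - s) ^ (H - 3/2) - (-s) ^ (H - 3/2)) • w s) (Icc (-1:ℝ) 0) := by
    have hg2 : IntegrableOn
        (fun s : ℝ => c₀ * (t ^ (H - 3/2) * (-s) ^ α + (-s) ^ (H - 3/2 + α)))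
        (Icc (-1:ℝ) 0) :=
      (((neg_rpow_integrable_Icc (by linarith)).const_mul (t ^ (H - 3/2))).add
        (neg_rpow_integrable_Icc (by linarith))).const_mul c₀
    refine hg2.mono' ((hwm t ht).mono_measure
      (Measure.restrict_mono (fun x hx => hx.2) le_rfl)) ?_
    exact (ae_restrict_mem measurableSet_Icc).mono fun s hs => hbd2 s hs
  have hFt : IntegrableOn
      (fun s => ((t - s) ^ (H - 3/2) - (-s) ^ (H - 3/2)) • w s) (Iic 0) := by
    refine (hInt1.union hInt2).mono_set fun s hs => ?_
    rcases le_or_gt s (-1) with h | h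
    · exact Or.inl h
    · exact Or.inr ⟨h.le, hs⟩
  -- the dominating function for the derivative
  set B : ℝ → ℝ := fun s =>
    (|H - 3/2| * c₀) * ((t/2 - s) ^ (H - 5/2) * (max 1 |s|) ^ ((1 + ε) / 2)) with hB
  have hBcont : ContinuousOn B (Iic (0:ℝ)) := by
    refine continuousOn_const.mul (ContinuousOn.mul ?_ ?_)
    · refine (continuousOn_const.sub continuousOn_id).rpow_const fun s hs => Or.inl ?_
      have hs0 : s ≤ 0 := hs
      have : (0:ℝ) < t/2 - s := by linarith
      exact this.ne'
    · exact ((continuous_const.max continuous_abs).continuousOn).rpow_const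
        fun s _ => Or.inr (by linarith)
  have hB2 : IntegrableOn B (Icc (-1:ℝ) 0) :=
    (hBcont.mono (Icc_subset_Iic_self)).integrableOn_Icc
  have hB1 : IntegrableOn B (Iic (-1:ℝ)) := by
    have hgi : IntegrableOn
        (fun s : ℝ => (|H - 3/2| * c₀) * (-s) ^ (H - 5/2 + (1 + ε) / 2)) (Iic (-1:ℝ)) :=
      (neg_rpow_integrable_Iic (by linarith)).const_mul _
    refine hgi.mono' ((hBcont.mono (Iic_subset_Iic.2 (by norm_num))).aestronglyMeasurable
      measurableSet_Iic) ?_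
    refine (ae_restrict_mem measurableSet_Iic).mono fun s hs => ?_
    have hs1 : s ≤ -1 := hs
    have hns : (0:ℝ) < -s := by linarith
    have hts : (0:ℝ) < t/2 - s := by linarith
    have hmax : max 1 |s| = -s := by
      rw [abs_of_neg (by linarith : s < 0)]; exact max_eq_right (by linarith)
    have hBnn : (0:ℝ) ≤ B s := by
      simp only [hB]
      exact mul_nonneg (mul_nonneg (abs_nonneg _) hc)
        (mul_nonneg (Real.rpow_nonneg hts.le _) (Real.rpow_nonneg (le_trans zero_le_one (le_max_left _ _)) _))
    rw [Real.norm_eq_abs, abs_of_nonneg hBnn]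
    simp only [hB, hmax]
    calc (|H - 3/2| * c₀) * ((t/2 - s) ^ (H - 5/2) * (-s) ^ ((1 + ε) / 2))
        ≤ (|H - 3/2| * c₀) * ((-s) ^ (H - 5/2) * (-s) ^ ((1 + ε) / 2)) := by
          refine mul_le_mul_of_nonneg_left ?_ (mul_nonneg (abs_nonneg _) hc)
          exact mul_le_mul_of_nonneg_right
            (Real.rpow_le_rpow_of_nonpos hns (by linarith) (by linarith))
            (Real.rpow_nonneg hns.le _)
      _ = (|H - 3/2| * c₀) * (-s) ^ (H - 5/2 + (1 + ε) / 2) := by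
          rw [← Real.rpow_add hns]
  have hBint : IntegrableOn B (Iic (0:ℝ)) := by
    refine (hB1.union hB2).mono_set fun s hs => ?_
    rcases le_or_gt s (-1) with h | h
    · exact Or.inl h
    · exact Or.inr ⟨h.le, hs⟩
  have hball : ∀ τ ∈ Metric.ball t (t/2), t/2 < τ := by
    intro τ hτ
    have h1 : |τ - t| < t/2 := by
      have := Metric.mem_ball.1 hτ; rwa [Real.dist_eq] at this
    have := abs_lt.1 h1
    linarith [this.1]
  have h_bound : ∀ᵐ s ∂(volume.restrict (Iic (0:ℝ))), ∀ τ ∈ Metric.ball t (t/2),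
      ‖(H - 3/2) • (((τ - s) ^ (H - 5/2)) • w s)‖ ≤ B s := by
    refine (ae_restrict_mem measurableSet_Iic).mono fun s hs τ hτ => ?_
    have hs0 : s ≤ 0 := hs
    have hτ2 : t/2 < τ := hball τ hτ
    have hts : (0:ℝ) < t/2 - s := by linarith
    rw [norm_smul, norm_smul, Real.norm_eq_abs, Real.norm_eq_abs,
      abs_of_nonneg (Real.rpow_nonneg (by linarith : (0:ℝ) ≤ τ - s) (H - 5/2))]
    have h2 : (τ - s) ^ (H - 5/2) ≤ (t/2 - s) ^ (H - 5/2) :=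
      Real.rpow_le_rpow_of_nonpos hts (by linarith) (by linarith)
    have h3 : ‖w s‖ ≤ c₀ * (max 1 |s|) ^ ((1 + ε) / 2) := hgrowth s hs0
    calc |H - 3/2| * ((τ - s) ^ (H - 5/2) * ‖w s‖)
        ≤ |H - 3/2| * ((t/2 - s) ^ (H - 5/2) * (c₀ * (max 1 |s|) ^ ((1 + ε) / 2))) := by
          refine mul_le_mul_of_nonneg_left ?_ (abs_nonneg _)
          exact mul_le_mul h2 h3 (norm_nonneg _) (Real.rpow_nonneg hts.le _)
      _ = B s := by simp only [hB]; ring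
  have hae_lt : ∀ᵐ s ∂(volume.restrict (Iic (0:ℝ))), s < 0 := by
    rw [← hrw]; exact ae_restrict_mem measurableSet_Iio
  have h_diff : ∀ᵐ s ∂(volume.restrict (Iic (0:ℝ))), ∀ τ ∈ Metric.ball t (t/2),
      HasDerivAt (fun τ => ((τ - s) ^ (H - 3/2) - (-s) ^ (H - 3/2)) • w s)
        ((H - 3/2) • (((τ - s) ^ (H - 5/2)) • w s)) τ := by
    refine hae_lt.mono fun s hs τ hτ => ?_
    have hτ2 : t/2 < τ := hball τ hτ
    have hτs : (0:ℝ) < τ - s := by linarith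
    have h1 : HasDerivAt (fun y : ℝ => y - s) 1 τ := (hasDerivAt_id τ).sub_const s
    have h2' : HasDerivAt (fun y : ℝ => (y - s) ^ (H - 3/2))
        ((H - 3/2) * (τ - s) ^ (H - 5/2)) τ := by
      have h2 := (Real.hasDerivAt_rpow_const (x := τ - s) (p := H - 3/2)
        (Or.inl hτs.ne')).comp τ h1
      simpa [Function.comp_def, show H - 3/2 - 1 = H - 5/2 from by ring] using h2
    have h3 := (h2'.sub_const ((-s) ^ (H - 3/2))).smul_const (w s)
    simpa [mul_smul] using h3
  have hF'm : AEStronglyMeasurable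
      (fun s : ℝ => (H - 3/2) • (((t - s) ^ (H - 5/2)) • w s))
      (volume.restrict (Iic (0:ℝ))) := by
    refine AEStronglyMeasurable.fun_const_smul ?_ _
    refine ContinuousOn.aestronglyMeasurable ?_ measurableSet_Iic
    refine ContinuousOn.smul (?_ : ContinuousOn (fun s : ℝ => (t - s) ^ (H - 5/2)) (Iic 0)) hw
    refine (continuousOn_const.sub continuousOn_id).rpow_const fun s hs => Or.inl ?_
    have hs0 : s ≤ 0 := hs
    have : (0:ℝ) < t - s := by linarith
    exact this.ne'
  have hFmeas : ∀ᶠ τ in nhds t, AEStronglyMeasurable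
      (fun s => ((τ - s) ^ (H - 3/2) - (-s) ^ (H - 3/2)) • w s)
      (volume.restrict (Iic (0:ℝ))) := by
    filter_upwards [Metric.ball_mem_nhds t (by positivity : (0:ℝ) < t/2)] with τ hτ
    exact hwm τ (by linarith [hball τ hτ])
  have key := hasDerivAt_integral_of_dominated_loc_of_deriv_le
    (μ := volume.restrict (Iic (0:ℝ)))
    (F := fun τ s => ((τ - s) ^ (H - 3/2) - (-s) ^ (H - 3/2)) • w s)
    (F' := fun τ s => (H - 3/2) • (((τ - s) ^ (H - 5/2)) • w s))
    (x₀ := t) (bound := B)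
    (Metric.ball_mem_nhds t (by positivity : (0:ℝ) < t/2)) hFmeas hFt hF'm h_bound hBint h_diff
  refine ⟨hFt, ?_⟩
  have h4 := key.2
  rwa [integral_smul] at h4
end
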